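/- arXiv:1804.10760 — 7 statements merged into one kernel-verified Lean document; each statement's English description precedes it below -/
import Mathlib

section
/- Let a < b be real numbers and let q : [a,b] → ℝ be continuous. Suppose y : [a,b] → ℝ is continuous on [a,b], twice differentiable on (a,b), satisfies y''(t) + q(t)·y(t) = 0 for all t ∈ (a,b), y(a) = y(b) = 0, and y(t) ≠ 0 for all t ∈ (a,b). Then ∫_a^b |q(s)| ds > 4/(b−a). -/
open Set MeasureTheory intervalIntegral

private lemma eqzero_of_integral_zero {u v : ℝ} (huv : u < v) {f : ℝ → ℝ}
    (hf : ContinuousOn f (Set.Icc u v)) (hnn : ∀ s ∈ Set.Icc u v, 0 ≤ f s)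
    (hz : (∫ s in u..v, f s) = 0) : ∀ s ∈ Set.Icc u v, f s = 0 := by
  have huicc : Set.uIcc u v = Set.Icc u v := Set.uIcc_of_le huv.le
  have hfi : IntervalIntegrable f volume u v :=
    (huicc ▸ hf : ContinuousOn f (Set.uIcc u v)).intervalIntegrable
  have hnn' : (0 : ℝ → ℝ) ≤ᵐ[volume.restrict (Set.Ioc u v)] f :=
    (ae_restrict_mem measurableSet_Ioc).mono fun s hs =>
      hnn s (Set.Ioc_subset_Icc_self hs)
  have hae : f =ᵐ[volume.restrict (Set.Ioc u v)] 0 :=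
    (integral_eq_zero_iff_of_le_of_nonneg_ae huv.le hnn' hfi).mp hz
  have hae' : f =ᵐ[volume.restrict (Set.Icc u v)] 0 := by
    rwa [Measure.restrict_congr_set Ioc_ae_eq_Icc] at hae
  exact fun s hs =>
    MeasureTheory.Measure.eqOn_Icc_of_ae_eq volume huv.ne hae' hf continuousOn_const hs

private lemma lyap_pos (a b : ℝ) (hab : a < b) (q y : ℝ → ℝ)
    (hq : ContinuousOn q (Set.Icc a b))
    (hy : ContinuousOn y (Set.Icc a b))
    (hy1 : ∀ t ∈ Set.Ioo a b, DifferentiableAt ℝ y t)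
    (hy2 : ∀ t ∈ Set.Ioo a b, DifferentiableAt ℝ (deriv y) t)
    (hode : ∀ t ∈ Set.Ioo a b, deriv (deriv y) t + q t * y t = 0)
    (hya : y a = 0) (hyb : y b = 0)
    (hpos : ∀ t ∈ Set.Ioo a b, 0 < y t) :
    4 / (b - a) < ∫ s in a..b, |q s| := by
  -- maximum point
  obtain ⟨c, hc, hcmax⟩ :=
    isCompact_Icc.exists_isMaxOn (Set.nonempty_Icc.2 hab.le) hy
  set M := y c with hM
  have hmid : (a + b) / 2 ∈ Set.Ioo a b := ⟨by linarith, by linarith⟩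
  have hMpos : 0 < M := lt_of_lt_of_le (hpos _ hmid) (hcmax (Set.mem_Icc.2 ⟨by linarith [hmid.1], by linarith [hmid.2]⟩))
  have hyc0 : y c ≠ 0 := ne_of_gt hMpos
  have hca : a < c := hc.1.lt_of_ne fun h => hyc0 (by rw [← h]; exact hya)
  have hcb : c < b := hc.2.lt_of_ne fun h => hyc0 (by rw [h]; exact hyb)
  have hcIoo : c ∈ Set.Ioo a b := ⟨hca, hcb⟩
  -- MVT on [a,c]
  obtain ⟨ξ, hξ, hξd⟩ := exists_deriv_eq_slope y hca
    (hy.mono (Set.Icc_subset_Icc le_rfl hc.2))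
    (fun x hx => (hy1 x ⟨hx.1, hx.2.trans hcb⟩).differentiableWithinAt)
  rw [hya, sub_zero] at hξd
  -- MVT on [c,b]
  obtain ⟨η, hη, hηd⟩ := exists_deriv_eq_slope y hcb
    (hy.mono (Set.Icc_subset_Icc hc.1 le_rfl))
    (fun x hx => (hy1 x ⟨hca.trans hx.1, hx.2⟩).differentiableWithinAt)
  rw [hyb] at hηd
  have hξIoo : ξ ∈ Set.Ioo a b := ⟨hξ.1, hξ.2.trans hcb⟩
  have hηIoo : η ∈ Set.Ioo a b := ⟨hca.trans hη.1, hη.2⟩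
  have hξη : ξ < η := hξ.2.trans hη.1
  have hIccsub : Set.Icc ξ η ⊆ Set.Ioo a b := fun t ht => ⟨hξIoo.1.trans_le ht.1, ht.2.trans_lt hηIoo.2⟩
  have hIccab : Set.Icc ξ η ⊆ Set.Icc a b := fun t ht => Set.Ioo_subset_Icc_self (hIccsub ht)
  -- y'' = -(q*y) on Ioo a b, continuous there
  have hcont2 : ContinuousOn (deriv (deriv y)) (Set.Icc ξ η) := by
    apply ContinuousOn.congr (f := fun t => -(q t * y t))
    · exact ((hq.mono hIccab).mul (hy.mono hIccab)).neg
    · intro t ht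
      have := hode t (hIccsub ht)
      show deriv (deriv y) t = -(q t * y t)
      linarith
  -- FTC for y' on [ξ, η]
  have hftc : (∫ s in ξ..η, deriv (deriv y) s) = deriv y η - deriv y ξ := by
    apply integral_deriv_eq_sub
    · intro x hx
      rw [Set.uIcc_of_le hξη.le] at hx
      exact hy2 x (hIccsub hx)
    · exact (hcont2.mono (by rw [Set.uIcc_of_le hξη.le])).intervalIntegrable
  have hSval : (∫ s in ξ..η, q s * y s) = M / (c - a) + M / (b - c) := by
    have : (∫ s in ξ..η, q s * y s) = -∫ s in ξ..η, deriv (deriv y) s := by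
      rw [← intervalIntegral.integral_neg]
      apply intervalIntegral.integral_congr
      intro t ht
      rw [Set.uIcc_of_le hξη.le] at ht
      have := hode t (hIccsub ht)
      show q t * y t = -(deriv (deriv y) t)
      linarith
    rw [this, hftc, hξd, hηd]
    have h1 : (0 - M) / (b - c) = -(M / (b - c)) := by ring
    rw [h1]; ring
  -- continuity pieces on [ξ,η]
  have huξη : Set.uIcc ξ η = Set.Icc ξ η := Set.uIcc_of_le hξη.le
  have hqy_c : ContinuousOn (fun s => q s * y s) (Set.Icc ξ η) :=
    (hq.mono hIccab).mul (hy.mono hIccab)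
  have hqay_c : ContinuousOn (fun s => |q s| * y s) (Set.Icc ξ η) :=
    (hq.mono hIccab).abs.mul (hy.mono hIccab)
  have hqaM_c : ContinuousOn (fun s => |q s| * M) (Set.Icc ξ η) :=
    (hq.mono hIccab).abs.mul continuousOn_const
  have hqabs : ContinuousOn (fun s => |q s|) (Set.Icc a b) := hq.abs
  have hqi : ∀ u v : ℝ, u ∈ Set.Icc a b → v ∈ Set.Icc a b →
      IntervalIntegrable (fun s => |q s|) volume u v := by
    intro u v hu hv
    apply ContinuousOn.intervalIntegrable
    apply hqabs.mono
    rw [← Set.uIcc_of_le hab.le]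
    exact Set.uIcc_subset_uIcc (by rwa [Set.uIcc_of_le hab.le]) (by rwa [Set.uIcc_of_le hab.le])
  by_contra H
  push_neg at H
  have h1 : (0:ℝ) < c - a := by linarith
  have h2 : (0:ℝ) < b - c := by linarith
  have h3 : (0:ℝ) < b - a := by linarith
  -- arithmetic AM-HM
  have e0 : 4 / (b - a) * M ≤ M / (c - a) + M / (b - c) := by
    rw [div_add_div _ _ h1.ne' h2.ne', div_mul_eq_mul_div, div_le_div_iff₀ h3 (mul_pos h1 h2)]
    nlinarith [sq_nonneg (c - a - (b - c)), hMpos.le]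
  -- chain inequalities
  have c1 : (∫ s in ξ..η, q s * y s) ≤ ∫ s in ξ..η, |q s| * y s := by
    apply intervalIntegral.integral_mono_on hξη.le
      ((huξη ▸ hqy_c : ContinuousOn _ (Set.uIcc ξ η)).intervalIntegrable)
      ((huξη ▸ hqay_c : ContinuousOn _ (Set.uIcc ξ η)).intervalIntegrable)
    intro s hs
    exact mul_le_mul_of_nonneg_right (le_abs_self _) (hpos s (hIccsub hs)).le
  have c2 : (∫ s in ξ..η, |q s| * y s) ≤ (∫ s in ξ..η, |q s|) * M := by
    rw [← intervalIntegral.integral_mul_const]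
    apply intervalIntegral.integral_mono_on hξη.le
      ((huξη ▸ hqay_c : ContinuousOn _ (Set.uIcc ξ η)).intervalIntegrable)
      ((huξη ▸ hqaM_c : ContinuousOn _ (Set.uIcc ξ η)).intervalIntegrable)
    intro s hs
    exact mul_le_mul_of_nonneg_left (hcmax (hIccab hs)) (abs_nonneg _)
  have c3 : (∫ s in ξ..η, |q s|) ≤ ∫ s in a..b, |q s| := by
    apply intervalIntegral.integral_mono_interval hξIoo.1.le hξη.le hηIoo.2.le
      (Filter.Eventually.of_forall fun x => abs_nonneg _)
      (hqi a b (Set.left_mem_Icc.2 hab.le) (Set.right_mem_Icc.2 hab.le))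
  have c4 : (∫ s in a..b, |q s|) * M ≤ 4 / (b - a) * M :=
    mul_le_mul_of_nonneg_right H hMpos.le
  have c3' : (∫ s in ξ..η, |q s|) * M ≤ (∫ s in a..b, |q s|) * M :=
    mul_le_mul_of_nonneg_right c3 hMpos.le
  -- all equalities
  have eA : (∫ s in ξ..η, |q s| * y s) = (∫ s in ξ..η, |q s|) * M := by
    refine le_antisymm c2 ?_
    rw [hSval] at c1
    linarith
  have eI : (∫ s in ξ..η, |q s|) = ∫ s in a..b, |q s| := by
    apply mul_right_cancel₀ hMpos.ne'
    refine le_antisymm c3' ?_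
    rw [hSval] at c1
    linarith
  -- q vanishes on [a, ξ]
  have hI1 : (∫ s in a..ξ, |q s|) = 0 := by
    have hint1 := hqi a ξ (Set.left_mem_Icc.2 hab.le) (Set.Ioo_subset_Icc_self hξIoo)
    have hint2 := hqi ξ η (Set.Ioo_subset_Icc_self hξIoo) (Set.Ioo_subset_Icc_self hηIoo)
    have hint3 := hqi η b (Set.Ioo_subset_Icc_self hηIoo) (Set.right_mem_Icc.2 hab.le)
    have hadd1 : (∫ s in a..ξ, |q s|) + ∫ s in ξ..η, |q s| = ∫ s in a..η, |q s| :=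
      intervalIntegral.integral_add_adjacent_intervals hint1 hint2
    have hadd2 : (∫ s in a..η, |q s|) + ∫ s in η..b, |q s| = ∫ s in a..b, |q s| :=
      intervalIntegral.integral_add_adjacent_intervals (hint1.trans hint2) hint3
    have nn1 : 0 ≤ ∫ s in a..ξ, |q s| :=
      intervalIntegral.integral_nonneg hξIoo.1.le fun u _ => abs_nonneg _
    have nn3 : 0 ≤ ∫ s in η..b, |q s| :=
      intervalIntegral.integral_nonneg hηIoo.2.le fun u _ => abs_nonneg _
    linarith [eI]
  have hq0aξ : ∀ s ∈ Set.Icc a ξ, |q s| = 0 := by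
    apply eqzero_of_integral_zero hξIoo.1
      (hqabs.mono (Set.Icc_subset_Icc le_rfl (hIccab (Set.left_mem_Icc.2 hξη.le)).2))
      (fun s _ => abs_nonneg _) hI1
  -- |q| * (M - y) vanishes on [ξ, η]
  have hq0ξη : ∀ s ∈ Set.Icc ξ η, |q s| * M - |q s| * y s = 0 := by
    apply eqzero_of_integral_zero hξη
      ((hqaM_c.sub hqay_c))
      (fun s hs => by
        have := mul_le_mul_of_nonneg_left (hcmax (hIccab hs)) (abs_nonneg (q s))
        show 0 ≤ |q s| * M - |q s| * y s
        linarith)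
    have : (∫ s in ξ..η, (|q s| * M - |q s| * y s)) =
        (∫ s in ξ..η, |q s| * M) - ∫ s in ξ..η, |q s| * y s := by
      apply intervalIntegral.integral_sub
        ((huξη ▸ hqaM_c : ContinuousOn _ (Set.uIcc ξ η)).intervalIntegrable)
        ((huξη ▸ hqay_c : ContinuousOn _ (Set.uIcc ξ η)).intervalIntegrable)
    show (∫ s in ξ..η, (|q s| * M - |q s| * y s)) = 0
    rw [this, intervalIntegral.integral_mul_const, eA, sub_self]
  -- first point where max is attained
  set T : Set ℝ := Set.Icc a b ∩ y ⁻¹' {M} with hT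
  have hTclosed : IsClosed T :=
    hy.preimage_isClosed_of_isClosed isClosed_Icc isClosed_singleton
  have hcT : c ∈ T := ⟨hc, rfl⟩
  have hTbdd : BddBelow T := ⟨a, fun t ht => ht.1.1⟩
  set τ := sInf T with hτ
  have hτT : τ ∈ T := hTclosed.csInf_mem ⟨c, hcT⟩ hTbdd
  have hτc : τ ≤ c := csInf_le hTbdd hcT
  have hyτ : y τ = M := hτT.2
  have hτa : a < τ := by
    rcases lt_or_eq_of_le hτT.1.1 with h | h
    · exact h
    · exfalso; rw [← h, hya] at hyτ; exact hMpos.ne hyτ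
  have hτb : τ < b := lt_of_le_of_lt hτc hcb
  have hylt : ∀ t ∈ Set.Ioo a τ, y t < M := by
    intro t ht
    have h1t : y t ≤ M := hcmax ⟨ht.1.le, (ht.2.trans hτb).le⟩
    rcases lt_or_eq_of_le h1t with h | h
    · exact h
    · exfalso
      have : τ ≤ t := csInf_le hTbdd ⟨⟨ht.1.le, (ht.2.trans hτb).le⟩, h⟩
      exact absurd this (not_le.2 ht.2)
  -- q = 0 on (a, τ)
  have hq0 : ∀ s ∈ Set.Ioo a τ, q s = 0 := by
    intro s hs
    rcases le_or_gt s ξ with h | h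
    · exact abs_eq_zero.mp (hq0aξ s ⟨hs.1.le, h⟩)
    · have hsmem : s ∈ Set.Icc ξ η := ⟨h.le, ((hs.2.trans_le hτc).trans hη.1).le⟩
      have := hq0ξη s hsmem
      have hlt := hylt s hs
      have : |q s| * (M - y s) = 0 := by linarith [this]
      rcases mul_eq_zero.mp this with h' | h'
      · exact abs_eq_zero.mp h'
      · exfalso; linarith
  -- deriv y is constant on (a, τ)
  have hIooτ : Set.Ioo a τ ⊆ Set.Ioo a b := fun t ht => ⟨ht.1, ht.2.trans hτb⟩
  have hdd0 : ∀ s ∈ Set.Ioo a τ, deriv (deriv y) s = 0 := by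
    intro s hs
    have h1 := hode s (hIooτ hs)
    rw [hq0 s hs] at h1
    linarith
  have hconst : ∀ s ∈ Set.Ioo a τ, ∀ t ∈ Set.Ioo a τ, deriv y s = deriv y t := by
    have key : ∀ s ∈ Set.Ioo a τ, ∀ t ∈ Set.Ioo a τ, s ≤ t → deriv y s = deriv y t := by
      intro s hs t ht hst
      have hsub2 : Set.uIcc s t ⊆ Set.Ioo a τ := by
        rw [Set.uIcc_of_le hst]
        exact fun x hx => ⟨hs.1.trans_le hx.1, hx.2.trans_lt ht.2⟩
      have hftc2 : (∫ r in s..t, deriv (deriv y) r) = deriv y t - deriv y s := by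
        apply integral_deriv_eq_sub
        · exact fun x hx => hy2 x (hIooτ (hsub2 hx))
        · apply ContinuousOn.intervalIntegrable
          exact (continuousOn_const (c := (0:ℝ))).congr fun x hx => hdd0 x (hsub2 hx)
      have hz2 : (∫ r in s..t, deriv (deriv y) r) = 0 := by
        rw [intervalIntegral.integral_congr (g := fun _ => (0:ℝ))
          (fun x hx => hdd0 x (hsub2 hx))]
        simp
      rw [hz2] at hftc2
      linarith
    intro s hs t ht
    rcases le_total s t with h | h
    · exact key s hs t ht h
    · exact (key t ht s hs h).symm
  -- MVT on [a, τ]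
  obtain ⟨ζ, hζ, hζd⟩ := exists_deriv_eq_slope y hτa
    (hy.mono (Set.Icc_subset_Icc le_rfl hτb.le))
    (fun x hx => (hy1 x (hIooτ hx)).differentiableWithinAt)
  rw [hya, sub_zero, hyτ] at hζd
  have hζpos : 0 < deriv y ζ := by
    rw [hζd]; exact div_pos hMpos (by linarith [hζ.1, hζ.2])
  -- deriv y τ = deriv y ζ by continuity
  have hcd : ContinuousAt (deriv y) τ := (hy2 τ ⟨hτa, hτb⟩).continuousAt
  have ht1 : Filter.Tendsto (deriv y) (nhdsWithin τ (Set.Iio τ)) (nhds (deriv y τ)) :=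
    hcd.continuousWithinAt.tendsto
  have ht2 : Filter.Tendsto (deriv y) (nhdsWithin τ (Set.Iio τ)) (nhds (deriv y ζ)) := by
    apply Filter.Tendsto.congr' _ tendsto_const_nhds
    filter_upwards [Ioo_mem_nhdsLT_of_mem (⟨hτa, le_rfl⟩ : τ ∈ Set.Ioc a τ)] with s hs
    exact (hconst s hs ζ hζ).symm
  have heq : deriv y τ = deriv y ζ := tendsto_nhds_unique ht1 ht2
  -- but τ is a local max, so deriv y τ = 0
  have hlm : IsLocalMax y τ := by
    apply Filter.eventually_of_mem (Icc_mem_nhds hτa hτb)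
    intro t ht
    exact (hcmax ht).trans_eq hyτ.symm
  have := hlm.deriv_eq_zero
  rw [heq] at this
  exact hζpos.ne' this

/-- **Classical Lyapunov inequality.** If `y` is a nontrivial solution of the
Dirichlet problem `y'' + q y = 0`, `y a = y b = 0`, with `y ≠ 0` on `(a,b)`,
then `∫ₐᵇ |q| > 4/(b-a)`. -/
theorem lyapunov_classical (a b : ℝ) (hab : a < b) (q y : ℝ → ℝ)
    (hq : ContinuousOn q (Set.Icc a b))
    (hy : ContinuousOn y (Set.Icc a b))
    (hy1 : ∀ t ∈ Set.Ioo a b, DifferentiableAt ℝ y t)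
    (hy2 : ∀ t ∈ Set.Ioo a b, DifferentiableAt ℝ (deriv y) t)
    (hode : ∀ t ∈ Set.Ioo a b, deriv (deriv y) t + q t * y t = 0)
    (hya : y a = 0) (hyb : y b = 0)
    (hne : ∀ t ∈ Set.Ioo a b, y t ≠ 0) :
    4 / (b - a) < ∫ s in a..b, |q s| := by
  have hmid : (a + b) / 2 ∈ Set.Ioo a b := ⟨by linarith, by linarith⟩
  -- sign is constant on (a,b)
  have hsign : (∀ t ∈ Set.Ioo a b, 0 < y t) ∨ (∀ t ∈ Set.Ioo a b, y t < 0) := by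
    rcases (hne _ hmid).lt_or_gt with h | h
    · right
      intro t ht
      rcases (hne t ht).lt_or_gt with h' | h'
      · exact h'
      · exfalso
        have hsub : Set.uIcc t ((a + b) / 2) ⊆ Set.Ioo a b :=
          Set.OrdConnected.uIcc_subset Set.ordConnected_Ioo ht hmid
        have hivt := intermediate_value_uIcc
          ((hy.mono (fun x hx => Set.Ioo_subset_Icc_self (hsub hx))) :
            ContinuousOn y (Set.uIcc t ((a + b) / 2)))
        have : (0:ℝ) ∈ Set.uIcc (y t) (y ((a + b) / 2)) := by
          rw [Set.mem_uIcc]; right; exact ⟨h.le, h'.le⟩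
        obtain ⟨s, hs, hs0⟩ := hivt this
        exact hne s (hsub hs) hs0
    · left
      intro t ht
      rcases (hne t ht).lt_or_gt with h' | h'
      · exfalso
        have hsub : Set.uIcc t ((a + b) / 2) ⊆ Set.Ioo a b :=
          Set.OrdConnected.uIcc_subset Set.ordConnected_Ioo ht hmid
        have hivt := intermediate_value_uIcc
          ((hy.mono (fun x hx => Set.Ioo_subset_Icc_self (hsub hx))) :
            ContinuousOn y (Set.uIcc t ((a + b) / 2)))
        have : (0:ℝ) ∈ Set.uIcc (y t) (y ((a + b) / 2)) := by
          rw [Set.mem_uIcc]; left; exact ⟨h'.le, h.le⟩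
        obtain ⟨s, hs, hs0⟩ := hivt this
        exact hne s (hsub hs) hs0
      · exact h'
  rcases hsign with hpos | hneg
  · exact lyap_pos a b hab q y hq hy hy1 hy2 hode hya hyb hpos
  · -- apply the positive lemma to -y
    have hdz : deriv (fun t => -y t) = fun t => -deriv y t := funext fun t => deriv.neg
    apply lyap_pos a b hab q (fun t => -y t) hq hy.neg
      (fun t ht => (hy1 t ht).neg)
      (fun t ht => by rw [hdz]; exact (hy2 t ht).neg)
      (fun t ht => by
        rw [hdz]
        have h1 : deriv (fun t => -deriv y t) t = -deriv (deriv y) t := deriv.neg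
        rw [h1]
        have := hode t ht
        ring_nf
        linarith)
      (by simp [hya]) (by simp [hyb])
      (fun t ht => by simpa using (hneg t ht))
end

section
/- Let a < b be real numbers and let q : [a,b] → ℝ be continuous. Suppose y : [a,b] → ℝ is continuous on [a,b], twice differentiable on (a,b), satisfies y''(t) + q(t)·y(t) = 0 for all t ∈ (a,b), y(a) = y(b) = 0, and y(t) ≠ 0 for all t ∈ (a,b). Then ∫_a^b q⁺(s) ds > 4/(b−a), where q⁺(t) = max{q(t), 0}. -/
open Set intervalIntegral

lemma wintner_aux (a b : ℝ) (hab : a < b) (q y : ℝ → ℝ)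
    (hq : ContinuousOn q (Set.Icc a b))
    (hy : ContinuousOn y (Set.Icc a b))
    (hy1 : ∀ t ∈ Set.Ioo a b, DifferentiableAt ℝ y t)
    (hy2 : ∀ t ∈ Set.Ioo a b, DifferentiableAt ℝ (deriv y) t)
    (hode : ∀ t ∈ Set.Ioo a b, deriv (deriv y) t + q t * y t = 0)
    (hya : y a = 0) (hyb : y b = 0)
    (hpos : ∀ t ∈ Set.Ioo a b, 0 < y t) :
    4 / (b - a) < ∫ s in a..b, max (q s) 0 := by
  -- maximum point
  obtain ⟨c, hc, hcmax⟩ := isCompact_Icc.exists_isMaxOn (Set.nonempty_Icc.2 hab.le) hy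
  set M := y c with hMdef
  have hmmem : (a + b) / 2 ∈ Set.Ioo a b := ⟨by linarith, by linarith⟩
  have hM : 0 < M := lt_of_lt_of_le (hpos _ hmmem) (hcmax (Set.Ioo_subset_Icc_self hmmem))
  have hac : a < c := lt_of_le_of_ne hc.1 (fun h => by simp only [hMdef, ← h, hya] at hM; exact lt_irrefl _ hM)
  have hcb : c < b := lt_of_le_of_ne hc.2 (fun h => by simp only [hMdef, h, hyb] at hM; exact lt_irrefl _ hM)
  -- mean value theorem on both sides
  obtain ⟨ξ, hξ, hdξ⟩ := exists_hasDerivAt_eq_slope y (deriv y) hac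
    (hy.mono (Set.Icc_subset_Icc le_rfl hc.2))
    (fun x hx => (hy1 x ⟨hx.1, hx.2.trans hcb⟩).hasDerivAt)
  obtain ⟨η, hη, hdη⟩ := exists_hasDerivAt_eq_slope y (deriv y) hcb
    (hy.mono (Set.Icc_subset_Icc hc.1 le_rfl))
    (fun x hx => (hy1 x ⟨hac.trans hx.1, hx.2⟩).hasDerivAt)
  rw [hya, sub_zero] at hdξ
  rw [hyb] at hdη
  have hξη : ξ < η := hξ.2.trans hη.1
  have hsub : Set.Icc ξ η ⊆ Set.Ioo a b :=
    fun t ht => ⟨hξ.1.trans_le ht.1, lt_of_le_of_lt ht.2 hη.2⟩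
  have hsub' : Set.Icc ξ η ⊆ Set.Icc a b := hsub.trans Set.Ioo_subset_Icc_self
  -- FTC
  have hcontqy : ContinuousOn (fun s => q s * y s) (Set.Icc a b) := hq.mul hy
  have key : ∫ s in ξ..η, -(q s * y s) = deriv y η - deriv y ξ := by
    apply intervalIntegral.integral_eq_sub_of_hasDerivAt
    · intro t ht
      rw [Set.uIcc_of_le hξη.le] at ht
      have htab := hsub ht
      have h1 := (hy2 t htab).hasDerivAt
      have h2 := hode t htab
      rw [show -(q t * y t) = deriv (deriv y) t by linarith]
      exact h1
    · apply ContinuousOn.intervalIntegrable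
      rw [Set.uIcc_of_le hξη.le]
      exact (hcontqy.mono hsub').neg
  have e1 : ∫ s in ξ..η, q s * y s = M / (c - a) + M / (b - c) := by
    have := key
    rw [intervalIntegral.integral_neg] at this
    have h2 : ∫ s in ξ..η, q s * y s = deriv y ξ - deriv y η := by linarith
    rw [h2, hdξ, hdη]
    ring
  by_contra hcon
  push_neg at hcon
  -- nonnegativity of h s = max (q s) 0 * M - q s * y s on Icc ξ η
  have hy_le : ∀ s ∈ Set.Icc a b, y s ≤ M := fun s hs => hcmax hs
  have hnonneg : ∀ s ∈ Set.Icc ξ η, 0 ≤ max (q s) 0 * M - q s * y s := by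
    intro s hs
    have h1 := hpos s (hsub hs)
    have h2 := hy_le s (hsub' hs)
    nlinarith [le_max_left (q s) 0, le_max_right (q s) 0]
  -- integrability facts
  have hcontm : ContinuousOn (fun s => max (q s) 0 * M) (Set.Icc a b) :=
    ((continuous_id.max continuous_const).comp_continuousOn hq).mul continuousOn_const
  have hint1 : IntervalIntegrable (fun s => q s * y s) MeasureTheory.volume ξ η := by
    apply ContinuousOn.intervalIntegrable
    rw [Set.uIcc_of_le hξη.le]; exact hcontqy.mono hsub'
  have hint2 : IntervalIntegrable (fun s => max (q s) 0 * M) MeasureTheory.volume ξ η := by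
    apply ContinuousOn.intervalIntegrable
    rw [Set.uIcc_of_le hξη.le]; exact hcontm.mono hsub'
  have hint3 : IntervalIntegrable (fun s => max (q s) 0 * M) MeasureTheory.volume a b := by
    apply ContinuousOn.intervalIntegrable
    rw [Set.uIcc_of_le hab.le]; exact hcontm
  -- the chain of inequalities
  have e2 : (∫ s in ξ..η, max (q s) 0 * M) ≤ ∫ s in a..b, max (q s) 0 * M := by
    apply intervalIntegral.integral_mono_interval hξ.1.le hξη.le
      (hη.2.le)
    · exact Filter.Eventually.of_forall fun s => mul_nonneg (le_max_right _ _) hM.le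
    · exact hint3
  have hca' : 0 < c - a := by linarith
  have hbc' : 0 < b - c := by linarith
  have e3 : (∫ s in a..b, max (q s) 0 * M) = (∫ s in a..b, max (q s) 0) * M :=
    intervalIntegral.integral_mul_const M _
  have hAM : 4 / (b - a) ≤ 1 / (c - a) + 1 / (b - c) := by
    rw [div_add_div _ _ hca'.ne' hbc'.ne', div_le_div_iff₀ (by linarith) (mul_pos hca' hbc')]
    nlinarith [sq_nonneg ((c - a) - (b - c))]
  have chain : (∫ s in ξ..η, max (q s) 0 * M) ≤ ∫ s in ξ..η, q s * y s := by
    calc (∫ s in ξ..η, max (q s) 0 * M) ≤ ∫ s in a..b, max (q s) 0 * M := e2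
      _ = (∫ s in a..b, max (q s) 0) * M := e3
      _ ≤ (4 / (b - a)) * M := mul_le_mul_of_nonneg_right hcon hM.le
      _ ≤ (1 / (c - a) + 1 / (b - c)) * M := mul_le_mul_of_nonneg_right hAM hM.le
      _ = M / (c - a) + M / (b - c) := by ring
      _ = ∫ s in ξ..η, q s * y s := e1.symm
  have hdiff : ∫ s in ξ..η, (max (q s) 0 * M - q s * y s) ≤ 0 := by
    rw [intervalIntegral.integral_sub hint2 hint1]; linarith
  by_cases hex : ∃ s ∈ Set.Icc ξ η, 0 < max (q s) 0 * M - q s * y s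
  · have hposint : 0 < ∫ s in ξ..η, (max (q s) 0 * M - q s * y s) :=
      intervalIntegral.integral_pos hξη ((hcontm.mono hsub').sub (hcontqy.mono hsub'))
        (fun x hx => hnonneg x (Set.Ioc_subset_Icc_self hx)) hex
    linarith
  · push_neg at hex
    have heq : ∀ s ∈ Set.Icc ξ η, max (q s) 0 * M = q s * y s := fun s hs =>
      le_antisymm (by linarith [hex s hs]) (by linarith [hnonneg s hs])
    have hexq : ∃ s0 ∈ Set.Icc ξ η, 0 < q s0 := by
      by_contra hq0
      push_neg at hq0
      have hz : Set.EqOn (fun s => q s * y s) (fun _ => (0:ℝ)) (Set.uIcc ξ η) := by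
        intro s hs
        rw [Set.uIcc_of_le hξη.le] at hs
        have h3 := heq s hs
        rw [max_eq_right (hq0 s hs), zero_mul] at h3
        exact h3.symm
      have hzz : ∫ s in ξ..η, q s * y s = 0 := by
        rw [intervalIntegral.integral_congr hz, intervalIntegral.integral_const, smul_zero]
      rw [e1] at hzz
      have : 0 < M / (c - a) + M / (b - c) := by positivity
      linarith
    obtain ⟨s0, hs0, hqs0⟩ := hexq
    have hconts0 : ContinuousAt q s0 :=
      hq.continuousAt (Icc_mem_nhds (hsub hs0).1 (hsub hs0).2)
    have hev0 : ∀ᶠ t in nhds s0, 0 < q t := hconts0.eventually (eventually_gt_nhds hqs0)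
    have hs0cl : s0 ∈ closure (Set.Ioo ξ η) := by rw [closure_Ioo hξη.ne]; exact hs0
    obtain ⟨s1, hs1q, hs1mem⟩ := mem_closure_iff_nhds.mp hs0cl _ hev0
    have hs1q : 0 < q s1 := hs1q
    have hs1ab : s1 ∈ Set.Ioo a b := hsub (Set.Ioo_subset_Icc_self hs1mem)
    have hconts1 : ContinuousAt q s1 :=
      hq.continuousAt (Icc_mem_nhds hs1ab.1 hs1ab.2)
    have hev1 : ∀ᶠ t in nhds s1, 0 < q t := hconts1.eventually (eventually_gt_nhds hs1q)
    have hev2 : ∀ᶠ t in nhds s1, t ∈ Set.Ioo ξ η := isOpen_Ioo.mem_nhds hs1mem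
    have hevy : y =ᶠ[nhds s1] fun _ => M := by
      filter_upwards [hev1, hev2] with t h1 h2
      have h3 := heq t (Set.Ioo_subset_Icc_self h2)
      rw [max_eq_left h1.le] at h3
      exact (mul_left_cancel₀ h1.ne' h3).symm
    have hevd : deriv y =ᶠ[nhds s1] fun _ => (0:ℝ) := by
      filter_upwards [hevy.eventually_nhds] with t ht
      calc deriv y t = deriv (fun _ => M) t := Filter.EventuallyEq.deriv_eq ht
        _ = 0 := deriv_const t M
    have hd2 : deriv (deriv y) s1 = 0 := by
      have h5 : deriv (deriv y) s1 = deriv (fun _ => (0:ℝ)) s1 :=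
        Filter.EventuallyEq.deriv_eq hevd
      rw [h5, deriv_const]
    have h6 := hode s1 hs1ab
    have hys1 : y s1 = M := hevy.self_of_nhds
    rw [hd2, hys1] at h6
    nlinarith



/-- **Wintner's inequality.** If `y` is a nontrivial solution of the Dirichlet
problem `y'' + q y = 0`, `y a = y b = 0`, with `y ≠ 0` on `(a,b)`, then
`∫ₐᵇ q⁺ > 4/(b-a)`, where `q⁺ = max q 0`. -/
theorem lyapunov_wintner (a b : ℝ) (hab : a < b) (q y : ℝ → ℝ)
    (hq : ContinuousOn q (Set.Icc a b))
    (hy : ContinuousOn y (Set.Icc a b))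
    (hy1 : ∀ t ∈ Set.Ioo a b, DifferentiableAt ℝ y t)
    (hy2 : ∀ t ∈ Set.Ioo a b, DifferentiableAt ℝ (deriv y) t)
    (hode : ∀ t ∈ Set.Ioo a b, deriv (deriv y) t + q t * y t = 0)
    (hya : y a = 0) (hyb : y b = 0)
    (hne : ∀ t ∈ Set.Ioo a b, y t ≠ 0) :
    4 / (b - a) < ∫ s in a..b, max (q s) 0 := by
  have hm : (a + b) / 2 ∈ Set.Ioo a b := ⟨by linarith, by linarith⟩
  have sign : (∀ t ∈ Set.Ioo a b, 0 < y t) ∨ (∀ t ∈ Set.Ioo a b, y t < 0) := by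
    have ivt : ∀ t ∈ Set.Ioo a b, ∀ u ∈ Set.Ioo a b, y t < 0 → 0 < y u → False := by
      intro t ht u hu hlt hgt
      have hsub : Set.uIcc t u ⊆ Set.Ioo a b := Set.ordConnected_Ioo.uIcc_subset ht hu
      have hival := intermediate_value_uIcc (hy.mono (hsub.trans Set.Ioo_subset_Icc_self))
      obtain ⟨z, hz, hz0⟩ := hival (Set.mem_uIcc.mpr (Or.inl ⟨hlt.le, hgt.le⟩))
      exact hne z (hsub hz) hz0
    rcases (hne _ hm).lt_or_gt with h | h
    · right; intro t ht
      rcases (hne t ht).lt_or_gt with h' | h'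
      · exact h'
      · exact absurd (ivt _ hm t ht h h') (by simp)
    · left; intro t ht
      rcases (hne t ht).lt_or_gt with h' | h'
      · exact absurd (ivt t ht _ hm h' h) (by simp)
      · exact h'
  rcases sign with hpos | hneg
  · exact wintner_aux a b hab q y hq hy hy1 hy2 hode hya hyb hpos
  · have hdz : deriv (fun t => -(y t)) = fun t => -(deriv y t) := funext fun t => deriv.neg
    apply wintner_aux a b hab q (fun t => -(y t)) hq hy.neg
      (fun t ht => (hy1 t ht).neg)
      (fun t ht => by rw [hdz]; exact (hy2 t ht).neg)
      ?_ (by simp [hya]) (by simp [hyb])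
      (fun t ht => neg_pos.mpr (hneg t ht))
    intro t ht
    have h1 := hode t ht
    have h2 : deriv (deriv fun t => -(y t)) t = -(deriv (deriv y) t) := by
      rw [hdz]; exact deriv.neg
    rw [h2]; linarith
end

section
/- Let a < b be real numbers and let q : [a,b] → ℝ be continuous. Suppose y : [a,b] → ℝ is continuous on [a,b], twice differentiable on (a,b), satisfies y''(t) + q(t)·y(t) = 0 for all t ∈ (a,b), y(a) = y(b) = 0, and y(t) ≠ 0 for all t ∈ (a,b). Then ∫_a^b (b−t)(t−a) q⁺(t) dt > b−a, where q⁺(t) = max{q(t), 0}. -/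
open Set intervalIntegral MeasureTheory

private lemma pos_integral_aux {f : ℝ → ℝ} {a b s0 : ℝ} (hab : a ≤ b)
    (hf : ContinuousOn f (Icc a b)) (h0 : ∀ s ∈ Icc a b, 0 ≤ f s)
    (hs0 : s0 ∈ Ioo a b) (hpos : 0 < f s0) :
    0 < ∫ s in a..b, f s := by
  have hca : ContinuousAt f s0 := hf.continuousAt (Icc_mem_nhds hs0.1 hs0.2)
  have hev : {x | 0 < f x} ∈ nhds s0 := hca.eventually (eventually_gt_nhds hpos)
  obtain ⟨u, v, hmem, hsub⟩ := mem_nhds_iff_exists_Ioo_subset.mp hev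
  set u' := max a u with hu'
  set v' := min b v with hv'
  have hau' : a ≤ u' := le_max_left a u
  have hv'b : v' ≤ b := min_le_left b v
  have hu's : u' < s0 := max_lt hs0.1 hmem.1
  have hsv' : s0 < v' := lt_min hs0.2 hmem.2
  have hu'v' : u' < v' := hu's.trans hsv'
  have hIcc : Ioo u' v' ⊆ Ioo u v :=
    Ioo_subset_Ioo (le_max_right a u) (min_le_right b v)
  have hint : ∀ x w : ℝ, a ≤ x → x ≤ w → w ≤ b → IntervalIntegrable f volume x w := by
    intro x w hx hxw hwb
    apply ContinuousOn.intervalIntegrable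
    apply hf.mono
    rw [uIcc_of_le hxw]
    exact Icc_subset_Icc hx hwb
  have h1 : 0 ≤ ∫ s in a..u', f s :=
    intervalIntegral.integral_nonneg hau' (fun x hx => h0 x ⟨hx.1, hx.2.trans (hu'v'.le.trans hv'b)⟩)
  have h2 : 0 < ∫ s in u'..v', f s := by
    apply intervalIntegral_pos_of_pos_on (hint u' v' hau' hu'v'.le hv'b) _ hu'v'
    intro x hx
    exact hsub (hIcc hx)
  have h3 : 0 ≤ ∫ s in v'..b, f s :=
    intervalIntegral.integral_nonneg hv'b (fun x hx => h0 x ⟨(hau'.trans hu'v'.le).trans hx.1, hx.2⟩)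
  have hsplit1 : ∫ s in a..v', f s = (∫ s in a..u', f s) + ∫ s in u'..v', f s :=
    (intervalIntegral.integral_add_adjacent_intervals
      (hint a u' le_rfl hau' (hu'v'.le.trans hv'b))
      (hint u' v' hau' hu'v'.le hv'b)).symm
  have hsplit2 : ∫ s in a..b, f s = (∫ s in a..v', f s) + ∫ s in v'..b, f s :=
    (intervalIntegral.integral_add_adjacent_intervals
      (hint a v' le_rfl (hau'.trans hu'v'.le) hv'b)
      (hint v' b (hau'.trans hu'v'.le) hv'b le_rfl)).symm
  rw [hsplit2, hsplit1]
  linarith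

private lemma lt_integral_aux {f g : ℝ → ℝ} {a b s0 : ℝ} (hab : a ≤ b)
    (hf : ContinuousOn f (Icc a b)) (hg : ContinuousOn g (Icc a b))
    (hle : ∀ s ∈ Icc a b, f s ≤ g s) (hs0 : s0 ∈ Ioo a b) (hlt : f s0 < g s0) :
    (∫ s in a..b, f s) < ∫ s in a..b, g s := by
  have h := pos_integral_aux (f := fun s => g s - f s) hab (hg.sub hf)
    (fun s hs => sub_nonneg.mpr (hle s hs)) hs0 (sub_pos.mpr hlt)
  have hif : IntervalIntegrable f volume a b :=
    (hf.mono (by rw [uIcc_of_le hab])).intervalIntegrable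
  have hig : IntervalIntegrable g volume a b :=
    (hg.mono (by rw [uIcc_of_le hab])).intervalIntegrable
  rw [intervalIntegral.integral_sub hig hif] at h
  linarith

private lemma hartman_pos (a b : ℝ) (hab : a < b) (q y : ℝ → ℝ)
    (hq : ContinuousOn q (Set.Icc a b))
    (hy : ContinuousOn y (Set.Icc a b))
    (hy1 : ∀ t ∈ Set.Ioo a b, DifferentiableAt ℝ y t)
    (hy2 : ∀ t ∈ Set.Ioo a b, DifferentiableAt ℝ (deriv y) t)
    (hode : ∀ t ∈ Set.Ioo a b, deriv (deriv y) t + q t * y t = 0)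
    (hya : y a = 0) (hyb : y b = 0)
    (hpos : ∀ t ∈ Set.Ioo a b, 0 < y t) :
    b - a < ∫ t in a..b, (b - t) * (t - a) * max (q t) 0 := by
  -- clamp map and extended coefficient function
  set p : ℝ → ℝ := fun t => min (max t a) b with hp
  have hpmem : ∀ t, p t ∈ Icc a b := by
    intro t
    exact ⟨le_min (le_max_right t a) hab.le, min_le_right _ _⟩
  have hpid : ∀ t ∈ Icc a b, p t = t := by
    intro t ht
    simp only [hp]
    rw [max_eq_left ht.1, min_eq_left ht.2]
  have hpc : Continuous p := (continuous_id.max continuous_const).min continuous_const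
  set w : ℝ → ℝ := fun t => q (p t) * y (p t) with hwdef
  have hwc : Continuous w :=
    (hq.comp_continuous hpc hpmem).mul (hy.comp_continuous hpc hpmem)
  have hweq : ∀ t ∈ Icc a b, w t = q t * y t := by
    intro t ht; simp only [hwdef, hpid t ht]
  -- max point
  obtain ⟨c, hcmem, hcmax⟩ := isCompact_Icc.exists_isMaxOn (nonempty_Icc.mpr hab.le) hy
  have hyM : ∀ s ∈ Icc a b, y s ≤ y c := hcmax
  have hmid : (a + b) / 2 ∈ Ioo a b := ⟨by linarith, by linarith⟩
  have hMpos : 0 < y c :=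
    lt_of_lt_of_le (hpos _ hmid) (hyM _ (Ioo_subset_Icc_self hmid))
  have hc : c ∈ Ioo a b := by
    constructor
    · rcases eq_or_lt_of_le hcmem.1 with h | h
      · exfalso; rw [← h, hya] at hMpos; exact lt_irrefl 0 hMpos
      · exact h
    · rcases eq_or_lt_of_le hcmem.2 with h | h
      · exfalso; rw [h, hyb] at hMpos; exact lt_irrefl 0 hMpos
      · exact h
  have hy0 : ∀ s ∈ Icc a b, 0 ≤ y s := by
    intro s hs
    rcases eq_or_lt_of_le hs.1 with h | h
    · rw [← h, hya]
    rcases eq_or_lt_of_le hs.2 with h' | h'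
    · rw [h', hyb]
    exact (hpos s ⟨h, h'⟩).le
  have hdc : deriv y c = 0 :=
    (hcmax.isLocalMax (Icc_mem_nhds hc.1 hc.2)).deriv_eq_zero
  -- Step A : deriv y t = ∫ s in t..c, w s for t ∈ Ioo a b
  have hOrd : OrdConnected (Ioo a b) := ordConnected_Ioo
  have hstepA : ∀ t ∈ Ioo a b, deriv y t = ∫ s in t..c, w s := by
    intro t ht
    have hsub : uIcc c t ⊆ Ioo a b := hOrd.uIcc_subset hc ht
    have key : (∫ s in c..t, -w s) = deriv y t - deriv y c := by
      apply intervalIntegral.integral_eq_sub_of_hasDerivAt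
      · intro s hs
        have hs' : s ∈ Ioo a b := hsub hs
        have h1 : HasDerivAt (deriv y) (deriv (deriv y) s) s := (hy2 s hs').hasDerivAt
        have h2 : deriv (deriv y) s = -w s := by
          have := hode s hs'
          rw [hweq s (Ioo_subset_Icc_self hs')]
          linarith
        rwa [h2] at h1
      · exact (hwc.neg).intervalIntegrable _ _
    rw [intervalIntegral.integral_neg, hdc] at key
    rw [intervalIntegral.integral_symm c t]
    linarith
  -- primitive g
  set g : ℝ → ℝ := fun s => ∫ u in s..c, w u with hgdef
  have hg' : ∀ s : ℝ, HasDerivAt g (-w s) s := by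
    intro s
    have h1 : HasDerivAt (fun u => ∫ x in c..u, w x) (w s) s :=
      intervalIntegral.integral_hasDerivAt_right ((hwc.intervalIntegrable) _ _)
        (hwc.stronglyMeasurableAtFilter _ _) hwc.continuousAt
    have h2 : g = fun u => -∫ x in c..u, w x := by
      funext u; simp only [hgdef]; rw [intervalIntegral.integral_symm]
    rw [h2]
    exact h1.neg
  have hgc : g c = 0 := intervalIntegral.integral_same
  have hgcont : Continuous g :=
    continuous_iff_continuousAt.mpr (fun s => (hg' s).continuousAt)
  -- second primitive
  set G : ℝ → ℝ := fun t => ∫ s in t..c, g s with hGdef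
  have hGcont : Continuous G := by
    have h1 : Continuous (fun u => ∫ x in c..u, g x) :=
      continuous_iff_continuousAt.mpr (fun s =>
        (intervalIntegral.integral_hasDerivAt_right ((hgcont.intervalIntegrable) _ _)
          (hgcont.stronglyMeasurableAtFilter _ _) hgcont.continuousAt).continuousAt)
    have h2 : G = fun u => -∫ x in c..u, g x := by
      funext u; simp only [hGdef]; rw [intervalIntegral.integral_symm]
    rw [h2]; exact h1.neg
  have hstepB : ∀ t ∈ Ioo a b, y c - y t = G t := by
    intro t ht
    have hsub : uIcc c t ⊆ Ioo a b := hOrd.uIcc_subset hc ht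
    have key : (∫ s in c..t, g s) = y t - y c := by
      apply intervalIntegral.integral_eq_sub_of_hasDerivAt
      · intro s hs
        have hs' := hsub hs
        have h1 : HasDerivAt y (deriv y s) s := (hy1 s hs').hasDerivAt
        rw [hstepA s hs'] at h1
        exact h1
      · exact hgcont.intervalIntegrable _ _
    show y c - y t = ∫ s in t..c, g s
    rw [intervalIntegral.integral_symm c t]
    linarith
  have hneA : (nhdsWithin a (Ioo a b)).NeBot := by
    apply mem_closure_iff_nhdsWithin_neBot.mp
    rw [closure_Ioo hab.ne]; exact ⟨le_rfl, hab.le⟩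
  have hneB : (nhdsWithin b (Ioo a b)).NeBot := by
    apply mem_closure_iff_nhdsWithin_neBot.mp
    rw [closure_Ioo hab.ne]; exact ⟨hab.le, le_rfl⟩
  have hGa : y c = ∫ s in a..c, g s := by
    have h1 : Filter.Tendsto (fun t => y c - y t) (nhdsWithin a (Ioo a b))
        (nhds (y c - y a)) :=
      tendsto_const_nhds.sub ((hy.continuousWithinAt ⟨le_rfl, hab.le⟩).mono_left
        (nhdsWithin_mono a Ioo_subset_Icc_self))
    have h2 : Filter.Tendsto G (nhdsWithin a (Ioo a b)) (nhds (G a)) :=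
      (hGcont.tendsto a).mono_left nhdsWithin_le_nhds
    have hev : (fun t => y c - y t) =ᶠ[nhdsWithin a (Ioo a b)] G := by
      filter_upwards [self_mem_nhdsWithin] with t ht using hstepB t ht
    have := tendsto_nhds_unique (h1.congr' hev) h2
    rw [hya, sub_zero] at this
    exact this
  have hGb : y c = ∫ s in b..c, g s := by
    have h1 : Filter.Tendsto (fun t => y c - y t) (nhdsWithin b (Ioo a b))
        (nhds (y c - y b)) :=
      tendsto_const_nhds.sub ((hy.continuousWithinAt ⟨hab.le, le_rfl⟩).mono_left
        (nhdsWithin_mono b Ioo_subset_Icc_self))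
    have h2 : Filter.Tendsto G (nhdsWithin b (Ioo a b)) (nhds (G b)) :=
      (hGcont.tendsto b).mono_left nhdsWithin_le_nhds
    have hev : (fun t => y c - y t) =ᶠ[nhdsWithin b (Ioo a b)] G := by
      filter_upwards [self_mem_nhdsWithin] with t ht using hstepB t ht
    have := tendsto_nhds_unique (h1.congr' hev) h2
    rw [hyb, sub_zero] at this
    exact this
  -- integration by parts
  have hswc : Continuous (fun s : ℝ => (s - a) * w s) :=
    (continuous_id.sub continuous_const).mul hwc
  have hbwc : Continuous (fun s : ℝ => (b - s) * w s) :=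
    (continuous_const.sub continuous_id).mul hwc
  have hM1 : y c = ∫ s in a..c, (s - a) * w s := by
    have key : (∫ s in a..c, (1 * g s + (s - a) * -w s)) =
        (c - a) * g c - (a - a) * g a := by
      apply intervalIntegral.integral_eq_sub_of_hasDerivAt
        (f := fun s => (s - a) * g s)
      · intro s _
        exact ((hasDerivAt_id s).sub_const a).mul (hg' s)
      · apply Continuous.intervalIntegrable
        exact (continuous_const.mul hgcont).add
          ((continuous_id.sub continuous_const).mul (hwc.neg))
    have e1 : (∫ s in a..c, (1 * g s + (s - a) * -w s)) =
        (∫ s in a..c, g s) - ∫ s in a..c, (s - a) * w s := by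
      rw [← intervalIntegral.integral_sub (hgcont.intervalIntegrable _ _)
        (hswc.intervalIntegrable _ _)]
      apply intervalIntegral.integral_congr
      intro s _; ring
    rw [e1, hgc] at key
    rw [hGa]; linarith
  have hM2 : y c = ∫ s in c..b, (b - s) * w s := by
    have key : (∫ s in c..b, (-1 * g s + (b - s) * -w s)) =
        (b - b) * g b - (b - c) * g c := by
      apply intervalIntegral.integral_eq_sub_of_hasDerivAt
        (f := fun s => (b - s) * g s)
      · intro s _
        exact ((hasDerivAt_id s).const_sub b).mul (hg' s)
      · apply Continuous.intervalIntegrable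
        exact (continuous_const.mul hgcont).add
          ((continuous_const.sub continuous_id).mul (hwc.neg))
    have e1 : (∫ s in c..b, (-1 * g s + (b - s) * -w s)) =
        (-∫ s in c..b, g s) - ∫ s in c..b, (b - s) * w s := by
      rw [← intervalIntegral.integral_neg,
        ← intervalIntegral.integral_sub (f := fun s => -g s) ((hgcont.neg).intervalIntegrable _ _)
        (hbwc.intervalIntegrable _ _)]
      apply intervalIntegral.integral_congr
      intro s _; ring
    rw [e1, hgc] at key
    have : y c = -∫ s in c..b, g s := by
      rw [hGb, intervalIntegral.integral_symm c b]
    linarith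
  -- existence of a point where w > 0 in (a,c)
  have hs0ex : ∃ s0 ∈ Ioo a c, 0 < w s0 := by
    by_contra hcon
    push_neg at hcon
    have hwc0 : w c ≤ 0 := by
      have hcl : c ∈ closure (Ioo a c) := by
        rw [closure_Ioo hc.1.ne]; exact ⟨hc.1.le, le_rfl⟩
      haveI hnb : (nhdsWithin c (Ioo a c)).NeBot := mem_closure_iff_nhdsWithin_neBot.mp hcl
      refine le_of_tendsto ((hwc.tendsto c).mono_left
        (nhdsWithin_le_nhds (s := Ioo a c))) ?_
      filter_upwards [self_mem_nhdsWithin] with s hs using hcon s hs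
    have hle0 : ∀ s ∈ Icc a c, 0 ≤ -((s - a) * w s) := by
      intro s hs
      rcases eq_or_lt_of_le hs.1 with h | h
      · rw [← h]; simp
      rcases eq_or_lt_of_le hs.2 with h' | h'
      · rw [h']; nlinarith [hwc0]
      · nlinarith [hcon s ⟨h, h'⟩]
    have hnn : 0 ≤ ∫ s in a..c, -((s - a) * w s) :=
      intervalIntegral.integral_nonneg hc.1.le hle0
    rw [intervalIntegral.integral_neg] at hnn
    rw [hM1] at hMpos
    linarith
  obtain ⟨s0, hs0m, hs0pos⟩ := hs0ex
  have hs0b : s0 ∈ Icc a b := ⟨hs0m.1.le, (hs0m.2.trans hc.2).le⟩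
  have hys0 : 0 < y s0 := hpos s0 ⟨hs0m.1, hs0m.2.trans hc.2⟩
  have hwq : w s0 = q s0 * y s0 := hweq s0 hs0b
  have hqpos : 0 < q s0 := by
    by_contra h
    push_neg at h
    nlinarith [mul_nonneg (neg_nonneg.mpr h) hys0.le]
  -- pointwise bound
  have hwle : ∀ s ∈ Icc a b, w s ≤ max (q s) 0 * y c := by
    intro s hs
    rw [hweq s hs]
    have h1 : q s * y s ≤ max (q s) 0 * y s :=
      mul_le_mul_of_nonneg_right (le_max_left _ _) (hy0 s hs)
    have h2 : max (q s) 0 * y s ≤ max (q s) 0 * y c :=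
      mul_le_mul_of_nonneg_left (hyM s hs) (le_max_right _ _)
    linarith
  have hQc : ContinuousOn (fun s => max (q s) 0) (Icc a b) :=
    fun x hx => (hq x hx).max continuousWithinAt_const
  have hIcc_ac : Icc a c ⊆ Icc a b := Icc_subset_Icc le_rfl hc.2.le
  have hIcc_cb : Icc c b ⊆ Icc a b := Icc_subset_Icc hc.1.le le_rfl
  have hicont : ContinuousOn (fun s => y c * ((b - s) * (s - a) * max (q s) 0)) (Icc a b) := by
    apply continuousOn_const.mul
    exact (((continuous_const.sub continuous_id).mul
      (continuous_id.sub continuous_const)).continuousOn).mul hQc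
  -- strict inequality on [a,c]
  have hineq1 : (∫ s in a..c, (b - c) * ((s - a) * w s)) <
      ∫ s in a..c, y c * ((b - s) * (s - a) * max (q s) 0) := by
    apply lt_integral_aux (f := fun s => (b - c) * ((s - a) * w s)) hc.1.le
      ((continuous_const.mul hswc).continuousOn) (hicont.mono hIcc_ac)
      ?_ hs0m ?_
    · intro s hs
      have h1 := hwle s (hIcc_ac hs)
      have hQ0 : (0:ℝ) ≤ max (q s) 0 := le_max_right _ _
      have hsa : 0 ≤ s - a := by linarith [hs.1]
      have hbc : 0 ≤ b - c := by linarith [hc.2]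
      have hbs : b - c ≤ b - s := by linarith [hs.2]
      have hA : (b - c) * ((s - a) * w s) ≤ (b - c) * ((s - a) * (max (q s) 0 * y c)) :=
        mul_le_mul_of_nonneg_left (mul_le_mul_of_nonneg_left h1 hsa) hbc
      have hB : (b - c) * ((s - a) * (max (q s) 0 * y c)) ≤
          (b - s) * ((s - a) * (max (q s) 0 * y c)) :=
        mul_le_mul_of_nonneg_right hbs
          (mul_nonneg hsa (mul_nonneg hQ0 hMpos.le))
      have hE : y c * ((b - s) * (s - a) * max (q s) 0) =
          (b - s) * ((s - a) * (max (q s) 0 * y c)) := by ring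
      linarith
    · have hQs0 : max (q s0) 0 = q s0 := max_eq_left hqpos.le
      rw [hQs0]
      have hys0M : y s0 ≤ y c := hyM s0 hs0b
      have h1 : w s0 ≤ q s0 * y c := by
        rw [hwq]; exact mul_le_mul_of_nonneg_left hys0M hqpos.le
      have hsa : 0 < s0 - a := by linarith [hs0m.1]
      have hA : (b - c) * ((s0 - a) * w s0) ≤ (b - c) * ((s0 - a) * (q s0 * y c)) :=
        mul_le_mul_of_nonneg_left (mul_le_mul_of_nonneg_left h1 hsa.le)
          (by linarith [hc.2])
      have hB : (b - c) * ((s0 - a) * (q s0 * y c)) <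
          (b - s0) * ((s0 - a) * (q s0 * y c)) := by
        apply mul_lt_mul_of_pos_right (by linarith [hs0m.2])
        exact mul_pos hsa (mul_pos hqpos hMpos)
      have hE : y c * ((b - s0) * (s0 - a) * q s0) =
          (b - s0) * ((s0 - a) * (q s0 * y c)) := by ring
      linarith
  -- non-strict inequality on [c,b]
  have hineq2 : (∫ s in c..b, (c - a) * ((b - s) * w s)) ≤
      ∫ s in c..b, y c * ((b - s) * (s - a) * max (q s) 0) := by
    apply intervalIntegral.integral_mono_on (f := fun s => (c - a) * ((b - s) * w s)) hc.2.le
      ((continuous_const.mul hbwc).intervalIntegrable _ _)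
      (by
        apply ContinuousOn.intervalIntegrable
        apply hicont.mono
        rw [uIcc_of_le hc.2.le]
        exact hIcc_cb)
    intro s hs
    have hsb : s ∈ Icc a b := hIcc_cb hs
    have h1 := hwle s hsb
    have hQ0 : (0:ℝ) ≤ max (q s) 0 := le_max_right _ _
    have hbs : 0 ≤ b - s := by linarith [hs.2]
    have hca : 0 ≤ c - a := by linarith [hc.1]
    have hcs : c - a ≤ s - a := by linarith [hs.1]
    have hA : (c - a) * ((b - s) * w s) ≤ (c - a) * ((b - s) * (max (q s) 0 * y c)) :=
      mul_le_mul_of_nonneg_left (mul_le_mul_of_nonneg_left h1 hbs) hca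
    have hB : (c - a) * ((b - s) * (max (q s) 0 * y c)) ≤
        (s - a) * ((b - s) * (max (q s) 0 * y c)) :=
      mul_le_mul_of_nonneg_right hcs
        (mul_nonneg hbs (mul_nonneg hQ0 hMpos.le))
    have hE : y c * ((b - s) * (s - a) * max (q s) 0) =
        (s - a) * ((b - s) * (max (q s) 0 * y c)) := by ring
    linarith
  -- pull out constants
  rw [intervalIntegral.integral_const_mul, intervalIntegral.integral_const_mul, ← hM1]
    at hineq1
  rw [intervalIntegral.integral_const_mul, intervalIntegral.integral_const_mul, ← hM2]
    at hineq2
  -- combine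
  have hsplit : (∫ t in a..b, (b - t) * (t - a) * max (q t) 0) =
      (∫ t in a..c, (b - t) * (t - a) * max (q t) 0) +
      ∫ t in c..b, (b - t) * (t - a) * max (q t) 0 := by
    symm
    apply intervalIntegral.integral_add_adjacent_intervals
    · apply ContinuousOn.intervalIntegrable
      apply ContinuousOn.mono ((((continuous_const.sub continuous_id).mul
        (continuous_id.sub continuous_const)).continuousOn).mul hQc)
      rw [uIcc_of_le hc.1.le]
      exact hIcc_ac
    · apply ContinuousOn.intervalIntegrable
      apply ContinuousOn.mono ((((continuous_const.sub continuous_id).mul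
        (continuous_id.sub continuous_const)).continuousOn).mul hQc)
      rw [uIcc_of_le hc.2.le]
      exact hIcc_cb
  have hfinal : (b - a) * y c <
      y c * ∫ t in a..b, (b - t) * (t - a) * max (q t) 0 := by
    rw [hsplit, mul_add]
    nlinarith [hineq1, hineq2]
  nlinarith [hfinal, hMpos]

/-- **Hartman's inequality.** If `y` is a nontrivial solution of the Dirichlet
problem `y'' + q y = 0`, `y a = y b = 0`, with `y ≠ 0` on `(a,b)`, then
`∫ₐᵇ (b-t)(t-a) q⁺(t) dt > b - a`, where `q⁺ = max q 0`. -/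
theorem lyapunov_hartman (a b : ℝ) (hab : a < b) (q y : ℝ → ℝ)
    (hq : ContinuousOn q (Set.Icc a b))
    (hy : ContinuousOn y (Set.Icc a b))
    (hy1 : ∀ t ∈ Set.Ioo a b, DifferentiableAt ℝ y t)
    (hy2 : ∀ t ∈ Set.Ioo a b, DifferentiableAt ℝ (deriv y) t)
    (hode : ∀ t ∈ Set.Ioo a b, deriv (deriv y) t + q t * y t = 0)
    (hya : y a = 0) (hyb : y b = 0)
    (hne : ∀ t ∈ Set.Ioo a b, y t ≠ 0) :
    b - a < ∫ t in a..b, (b - t) * (t - a) * max (q t) 0 := by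
  have hmid : (a + b) / 2 ∈ Set.Ioo a b := ⟨by linarith, by linarith⟩
  have hord : Set.OrdConnected (Set.Ioo a b) := Set.ordConnected_Ioo
  rcases lt_or_gt_of_ne (hne _ hmid) with hneg | hposm
  · -- y is negative on (a,b): apply the positive case to -y
    have hyneg : ∀ t ∈ Set.Ioo a b, 0 < -y t := by
      intro t ht
      rcases lt_or_gt_of_ne (hne t ht) with h | h
      · linarith
      · exfalso
        have hsub : Set.uIcc ((a + b) / 2) t ⊆ Set.Ioo a b := hord.uIcc_subset hmid ht
        have hcont : ContinuousOn y (Set.uIcc ((a + b) / 2) t) :=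
          hy.mono (hsub.trans Set.Ioo_subset_Icc_self)
        have h0 : (0 : ℝ) ∈ Set.uIcc (y ((a + b) / 2)) (y t) :=
          Set.mem_uIcc.mpr (Or.inl ⟨hneg.le, h.le⟩)
        obtain ⟨s, hs, hs0⟩ := intermediate_value_uIcc hcont h0
        exact hne s (hsub hs) hs0
    have hderneg : (deriv fun s => -y s) = fun s => -deriv y s :=
      funext (fun s => deriv.neg)
    exact hartman_pos a b hab q (fun t => -y t) hq hy.neg
      (fun t ht => (hy1 t ht).neg)
      (fun t ht => by rw [hderneg]; exact (hy2 t ht).neg)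
      (fun t ht => by
        rw [hderneg, deriv.fun_neg]
        show -deriv (deriv y) t + q t * -y t = 0
        have := hode t ht
        linarith)
      (by simp [hya]) (by simp [hyb]) hyneg
  · have hypos : ∀ t ∈ Set.Ioo a b, 0 < y t := by
      intro t ht
      rcases lt_or_gt_of_ne (hne t ht) with h | h
      · exfalso
        have hsub : Set.uIcc ((a + b) / 2) t ⊆ Set.Ioo a b := hord.uIcc_subset hmid ht
        have hcont : ContinuousOn y (Set.uIcc ((a + b) / 2) t) :=
          hy.mono (hsub.trans Set.Ioo_subset_Icc_self)
        have h0 : (0 : ℝ) ∈ Set.uIcc (y ((a + b) / 2)) (y t) :=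
          Set.mem_uIcc.mpr (Or.inr ⟨h.le, hposm.le⟩)
        obtain ⟨s, hs, hs0⟩ := intermediate_value_uIcc hcont h0
        exact hne s (hsub hs) hs0
      · exact h
    exact hartman_pos a b hab q y hq hy hy1 hy2 hode hya hyb hypos
end

section
/- Let a < b be real numbers and 1 < α ≤ 2. Define G : [a,b] × [a,b] → ℝ by G(t,s) = (1/Γ(α))·((b−s)^{α−1}(t−a)^{α−1}/(b−a)^{α−1}) for a ≤ t ≤ s ≤ b, and G(t,s) = (1/Γ(α))·((b−s)^{α−1}(t−a)^{α−1}/(b−a)^{α−1} − (t−s)^{α−1}) for a ≤ s ≤ t ≤ b. Then: (i) G(t,s) ≥ 0 for all t, s ∈ [a,b]; (ii) for each fixed s ∈ [a,b], the maximum of G(t,s) over t ∈ [a,b] equals G(s,s); (iii) the maximum of G(s,s) over s ∈ [a,b] is attained at s = (a+b)/2 and equals (1/Γ(α))·((b−a)/4)^{α−1}. -/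
/-- Properties of the Green's function of the Riemann–Liouville fractional
Dirichlet boundary value problem of order `1 < α ≤ 2`:
nonnegativity, maximum along each column at the diagonal, and the value and
location of the maximum of the diagonal. -/
theorem green_function_properties (a b α : ℝ) (hab : a < b) (hα1 : 1 < α) (hα2 : α ≤ 2)
    (G : ℝ → ℝ → ℝ)
    (hG1 : ∀ t s : ℝ, a ≤ t → t ≤ s → s ≤ b →
      G t s = (1 / Real.Gamma α) *
        ((b - s) ^ (α - 1) * (t - a) ^ (α - 1) / (b - a) ^ (α - 1)))
    (hG2 : ∀ t s : ℝ, a ≤ s → s ≤ t → t ≤ b →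
      G t s = (1 / Real.Gamma α) *
        ((b - s) ^ (α - 1) * (t - a) ^ (α - 1) / (b - a) ^ (α - 1) - (t - s) ^ (α - 1))) :
    (∀ t ∈ Set.Icc a b, ∀ s ∈ Set.Icc a b, 0 ≤ G t s) ∧
    (∀ s ∈ Set.Icc a b, IsMaxOn (fun t => G t s) (Set.Icc a b) s) ∧
    (IsMaxOn (fun s => G s s) (Set.Icc a b) ((a + b) / 2) ∧
      G ((a + b) / 2) ((a + b) / 2) = (1 / Real.Gamma α) * ((b - a) / 4) ^ (α - 1)) := by
  have hΓ : 0 < Real.Gamma α := Real.Gamma_pos_of_pos (by linarith)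
  have hc : 0 ≤ 1 / Real.Gamma α := by positivity
  set β := α - 1 with hβdef
  have hβ0 : 0 < β := by rw [hβdef]; linarith
  have hβ1 : β ≤ 1 := by rw [hβdef]; linarith
  have hba : (0:ℝ) < b - a := by linarith
  have hD : (0:ℝ) < (b - a) ^ β := Real.rpow_pos_of_pos hba β
  have subadd : ∀ x y : ℝ, 0 ≤ x → 0 ≤ y → (x + y) ^ β ≤ x ^ β + y ^ β := by
    intro x y hx hy
    have := NNReal.rpow_add_le_add_rpow (⟨x, hx⟩ : NNReal) (⟨y, hy⟩ : NNReal) hβ0.le hβ1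
    have h2 := (NNReal.coe_le_coe).2 this
    push_cast at h2
    exact h2
  have key : ∀ s t : ℝ, a ≤ s → s ≤ t → t ≤ b →
      (t - s) ^ β ≤ (b - s) ^ β * (t - a) ^ β / (b - a) ^ β := by
    intro s t hs hst htb
    have h1 : (0:ℝ) ≤ b - s := by linarith
    have h2 : (0:ℝ) ≤ t - a := by linarith
    have h3 : t - s ≤ (b - s) * (t - a) / (b - a) := by
      rw [le_div_iff₀ hba]; nlinarith
    calc (t - s) ^ β ≤ ((b - s) * (t - a) / (b - a)) ^ β :=
          Real.rpow_le_rpow (by linarith) h3 hβ0.le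
      _ = (b - s) ^ β * (t - a) ^ β / (b - a) ^ β := by
          rw [Real.div_rpow (by positivity) hba.le, Real.mul_rpow h1 h2]
  refine ⟨?_, ?_, ?_, ?_⟩
  · -- nonnegativity
    intro t ht s hs
    rcases le_total t s with h | h
    · rw [hG1 t s ht.1 h hs.2]
      have h1 : (0:ℝ) ≤ b - s := by linarith [hs.2]
      have h2 : (0:ℝ) ≤ t - a := by linarith [ht.1]
      have := Real.rpow_nonneg h1 β
      have := Real.rpow_nonneg h2 β
      positivity
    · rw [hG2 t s hs.1 h ht.2]
      have := key s t hs.1 h ht.2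
      apply mul_nonneg hc
      linarith
  · -- column maximum at the diagonal
    intro s hs
    rw [isMaxOn_iff]
    intro t ht
    have hGss : G s s = (1 / Real.Gamma α) *
        ((b - s) ^ β * (s - a) ^ β / (b - a) ^ β) := hG1 s s hs.1 le_rfl hs.2
    have h1 : (0:ℝ) ≤ b - s := by linarith [hs.2]
    have h2 : (0:ℝ) ≤ s - a := by linarith [hs.1]
    rcases le_total t s with h | h
    · rw [hG1 t s ht.1 h hs.2, hGss]
      have h3 : (0:ℝ) ≤ t - a := by linarith [ht.1]
      have h4 : (t - a) ^ β ≤ (s - a) ^ β :=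
        Real.rpow_le_rpow h3 (by linarith) hβ0.le
      have hKn : 0 ≤ (b - s) ^ β := Real.rpow_nonneg h1 β
      gcongr
    · rw [hG2 t s hs.1 h ht.2, hGss]
      apply mul_le_mul_of_nonneg_left _ hc
      set A := (t - a) ^ β
      set B := (s - a) ^ β
      set C := (t - s) ^ β
      set K := (b - s) ^ β
      set D := (b - a) ^ β
      have hA : A = ((s - a) + (t - s)) ^ β := by rw [show s - a + (t - s) = t - a by ring]
      have hsub : A ≤ B + C := by rw [hA]; exact subadd _ _ h2 (by linarith)
      have hBA : B ≤ A := Real.rpow_le_rpow h2 (by linarith) hβ0.le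
      have hKD : K ≤ D := Real.rpow_le_rpow h1 (by linarith [ht.2]) hβ0.le
      have hC : 0 ≤ C := Real.rpow_nonneg (by linarith) β
      have hK : 0 ≤ K := Real.rpow_nonneg h1 β
      rw [div_sub' hD.ne', div_le_div_iff₀ hD hD]  -- messy, fallback
      have hAC : A - B ≤ C := by linarith
      nlinarith [mul_le_mul_of_nonneg_right
          (mul_le_mul_of_nonneg_left hKD (sub_nonneg.2 hBA)) hD.le,
        mul_le_mul_of_nonneg_right (mul_le_mul_of_nonneg_right hAC hD.le) hD.le]
  · -- diagonal maximum location
    rw [isMaxOn_iff]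
    intro s hs
    have h1 : (0:ℝ) ≤ b - s := by linarith [hs.2]
    have h2 : (0:ℝ) ≤ s - a := by linarith [hs.1]
    rw [hG1 s s hs.1 le_rfl hs.2,
      hG1 ((a+b)/2) ((a+b)/2) (by linarith) le_rfl (by linarith)]
    apply mul_le_mul_of_nonneg_left _ hc
    have e1 : (b - s) ^ β * (s - a) ^ β / (b - a) ^ β
        = ((b - s) * (s - a) / (b - a)) ^ β := by
      rw [Real.div_rpow (by positivity) hba.le, Real.mul_rpow h1 h2]
    have e2 : (b - (a+b)/2) ^ β * ((a+b)/2 - a) ^ β / (b - a) ^ β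
        = ((b - a) / 4) ^ β := by
      rw [show b - (a+b)/2 = (b-a)/2 by ring, show (a+b)/2 - a = (b-a)/2 by ring,
        ← Real.mul_rpow (by linarith) (by linarith),
        ← Real.div_rpow (by positivity) hba.le,
        show (b-a)/2 * ((b-a)/2) / (b-a) = (b-a)/4 by field_simp; ring]
    rw [e1, e2]
    apply Real.rpow_le_rpow (by positivity) _ hβ0.le
    rw [div_le_div_iff₀ hba (by norm_num : (0:ℝ) < 4)]
    nlinarith [sq_nonneg (b + a - 2*s)]
  · -- value at the midpoint
    rw [hG1 ((a+b)/2) ((a+b)/2) (by linarith) le_rfl (by linarith)]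
    congr 1
    rw [show b - (a+b)/2 = (b-a)/2 by ring, show (a+b)/2 - a = (b-a)/2 by ring,
      ← Real.mul_rpow (by linarith) (by linarith),
      ← Real.div_rpow (by positivity) hba.le,
      show (b-a)/2 * ((b-a)/2) / (b-a) = (b-a)/4 by field_simp; ring]
end

section
/- Let 1 < α ≤ 2 and let z be a real number with |z| ≤ Γ(α)·4^{α−1}. Then the Mittag-Leffler function E_α(z) = ∑_{k=0}^∞ z^k / Γ(kα + α) is nonzero, i.e., E_α has no real zeros in the interval [−Γ(α)·4^{α−1}, Γ(α)·4^{α−1}]. -/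
/-- Increments of `log ∘ Γ` are monotone: for `0 < x ≤ y` and `0 < d`,
`Γ(x+d)·Γ(y) ≤ Γ(y+d)·Γ(x)`. -/
lemma gamma_increment_mono {x y d : ℝ} (hx : 0 < x) (hxy : x ≤ y) (hd : 0 < d) :
    Real.Gamma (x + d) * Real.Gamma y ≤ Real.Gamma (y + d) * Real.Gamma x := by
  rcases eq_or_lt_of_le hxy with rfl | hlt
  · rw [mul_comm]
  · have hy : 0 < y := hx.trans hlt
    have hconv := Real.convexOn_log_Gamma
    set l : ℝ := (y - x) / (y - x + d) with hl
    set t : ℝ := d / (y - x + d) with ht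
    have hden : 0 < y - x + d := by linarith
    have hl0 : 0 ≤ l := div_nonneg (by linarith) hden.le
    have ht0 : 0 ≤ t := div_nonneg hd.le hden.le
    have hlt1 : l + t = 1 := by
      rw [hl, ht, ← add_div, div_self hden.ne']
    have hxm : x ∈ Set.Ioi (0:ℝ) := hx
    have hbm : y + d ∈ Set.Ioi (0:ℝ) := by
      simp only [Set.mem_Ioi]; linarith
    have h1 := hconv.2 hxm hbm hl0 ht0 hlt1
    have h2 := hconv.2 hxm hbm ht0 hl0 (by linarith)
    have e1 : l • x + t • (y + d) = x + d := by
      simp only [smul_eq_mul, hl, ht]; field_simp; ring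
    have e2 : t • x + l • (y + d) = y := by
      simp only [smul_eq_mul, hl, ht]; field_simp; ring
    rw [e1] at h1
    rw [e2] at h2
    have hsum : Real.log (Real.Gamma (x + d)) + Real.log (Real.Gamma y) ≤
        Real.log (Real.Gamma (y + d)) + Real.log (Real.Gamma x) := by
      simp only [Function.comp, smul_eq_mul] at h1 h2
      have hcomb : (l + t) * (Real.log (Real.Gamma x) + Real.log (Real.Gamma (y + d)))
          = Real.log (Real.Gamma x) + Real.log (Real.Gamma (y + d)) := by
        rw [hlt1, one_mul]
      nlinarith [h1, h2, hcomb]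
    have hGx := Real.Gamma_pos_of_pos hx
    have hGy := Real.Gamma_pos_of_pos hy
    have hGxd := Real.Gamma_pos_of_pos (by linarith : (0:ℝ) < x + d)
    have hGyd := Real.Gamma_pos_of_pos (by linarith : (0:ℝ) < y + d)
    have := Real.exp_le_exp.2 hsum
    rwa [Real.exp_add, Real.exp_add, Real.exp_log hGxd, Real.exp_log hGy,
      Real.exp_log hGyd, Real.exp_log hGx] at this

set_option maxHeartbeats 1000000 in
/-- The Mittag-Leffler function `E_α(z) = ∑_{k=0}^∞ z^k / Γ(kα + α)` has no real
zeros for `|z| ≤ Γ(α)·4^{α-1}`, when `1 < α ≤ 2`. -/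
theorem mittag_leffler_no_real_zeros (α z : ℝ) (hα1 : 1 < α) (hα2 : α ≤ 2)
    (hz : |z| ≤ Real.Gamma α * (4 : ℝ) ^ (α - 1)) :
    (∑' k : ℕ, z ^ k / Real.Gamma (k * α + α)) ≠ 0 := by
  have hα0 : (0:ℝ) < α := by linarith
  have hGα : 0 < Real.Gamma α := Real.Gamma_pos_of_pos hα0
  have hGpos : ∀ k : ℕ, 0 < Real.Gamma ((k : ℝ) * α + α) := fun k =>
    Real.Gamma_pos_of_pos (by positivity)
  -- Γ(α) ≤ 1 on [1,2]
  have hΓα1 : Real.Gamma α ≤ 1 := by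
    have hseg : α ∈ segment ℝ (1:ℝ) 2 := by
      rw [segment_eq_Icc (by norm_num : (1:ℝ) ≤ 2)]
      exact ⟨hα1.le, hα2⟩
    have := Real.convexOn_Gamma.le_on_segment (by norm_num : (1:ℝ) ∈ Set.Ioi (0:ℝ))
      (by norm_num : (2:ℝ) ∈ Set.Ioi (0:ℝ)) hseg
    rwa [Real.Gamma_one, Real.Gamma_two, max_self] at this
  have h4p0 : (0:ℝ) < (4:ℝ) ^ (α - 1) := by positivity
  -- 4^(α-1) ≤ 3α - 2 by convexity of exp
  have h4lin : (4:ℝ) ^ (α - 1) ≤ 3 * α - 2 := by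
    have hconv := convexOn_exp.2 (Set.mem_univ (0:ℝ)) (Set.mem_univ (Real.log 4))
      (by linarith : (0:ℝ) ≤ 2 - α) (by linarith : (0:ℝ) ≤ α - 1) (by ring)
    simp only [smul_eq_mul, mul_zero, zero_add, Real.exp_zero] at hconv
    rw [Real.exp_log (by norm_num : (0:ℝ) < 4)] at hconv
    have : (4:ℝ) ^ (α - 1) = Real.exp ((α - 1) * Real.log 4) := by
      rw [Real.rpow_def_of_pos (by norm_num : (0:ℝ) < 4)]
      ring_nf
    rw [this]
    linarith [hconv]
  have hc4 : Real.Gamma α * (4:ℝ) ^ (α - 1) ≤ 4 := by nlinarith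
  have hz4 : |z| ≤ 4 := hz.trans hc4
  -- duplication: Γ(α)² · 4^(α-1) ≤ Γ(2α)
  have hdup : Real.Gamma α ^ 2 * (4:ℝ) ^ (α - 1) ≤ Real.Gamma (2 * α) := by
    have hhalf : Real.Gamma (1 + 1/2) * Real.Gamma α ≤ Real.Gamma (α + 1/2) * Real.Gamma 1 :=
      gamma_increment_mono one_pos hα1.le (by norm_num)
    have h32 : Real.Gamma (1 + 1/2 : ℝ) = Real.sqrt Real.pi / 2 := by
      have h : (1 + 1/2 : ℝ) = 1/2 + 1 := by norm_num
      rw [h, Real.Gamma_add_one (by norm_num), Real.Gamma_one_half_eq]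
      ring
    rw [h32, Real.Gamma_one, mul_one] at hhalf
    have hdup0 := Real.Gamma_mul_Gamma_add_half α
    have hsqrtπ : 0 < Real.sqrt Real.pi := Real.sqrt_pos.2 Real.pi_pos
    have hpow : (4:ℝ) ^ (α - 1) * (2:ℝ) ^ (1 - 2*α) = 1/2 := by
      have h4 : (4:ℝ) ^ (α - 1) = (2:ℝ) ^ (2 * (α - 1)) := by
        rw [show (4:ℝ) = (2:ℝ) ^ (2:ℝ) by
          rw [show (2:ℝ) ^ (2:ℝ) = (2:ℝ) ^ ((2:ℕ):ℝ) by norm_num, Real.rpow_natCast]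
          norm_num]
        rw [← Real.rpow_mul (by norm_num : (0:ℝ) ≤ 2)]
      rw [h4, ← Real.rpow_add (by norm_num : (0:ℝ) < 2),
        show 2 * (α - 1) + (1 - 2*α) = -1 by ring, Real.rpow_neg_one]
      norm_num
    have h2pow : 0 < (2:ℝ) ^ (1 - 2*α) := by positivity
    have hGαh : 0 < Real.Gamma (α + 1/2) := Real.Gamma_pos_of_pos (by linarith)
    have key : Real.Gamma α ^ 2 * (4:ℝ) ^ (α-1) * ((2:ℝ) ^ (1 - 2*α) * Real.sqrt Real.pi) ≤
        Real.Gamma α * Real.Gamma (α + 1/2) := by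
      have he : Real.Gamma α ^ 2 * (4:ℝ) ^ (α-1) * ((2:ℝ) ^ (1 - 2*α) * Real.sqrt Real.pi)
          = Real.Gamma α * (Real.sqrt Real.pi / 2 * Real.Gamma α) := by
        linear_combination (Real.sqrt Real.pi * Real.Gamma α ^ 2) * hpow
      rw [he]
      nlinarith [hhalf, hGα]
    rw [hdup0] at key
    have h2s : 0 < (2:ℝ) ^ (1 - 2*α) * Real.sqrt Real.pi := by positivity
    have key' : Real.Gamma α ^ 2 * (4:ℝ) ^ (α-1) * ((2:ℝ) ^ (1 - 2*α) * Real.sqrt Real.pi) ≤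
        Real.Gamma (2*α) * ((2:ℝ) ^ (1 - 2*α) * Real.sqrt Real.pi) := by
      linarith [key]
    exact le_of_mul_le_mul_right key' h2s
  -- key decreasing inequality: |z|·Γ(kα+α) ≤ Γ((k+1)α+α)
  have key : ∀ k : ℕ, |z| * Real.Gamma ((k:ℝ) * α + α) ≤ Real.Gamma (((k:ℝ)+1) * α + α) := by
    intro k
    have hmono : Real.Gamma (α + α) * Real.Gamma ((k:ℝ)*α + α) ≤
        Real.Gamma (((k:ℝ)*α + α) + α) * Real.Gamma α := by
      apply gamma_increment_mono hα0 _ hα0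
      nlinarith [Nat.cast_nonneg (α := ℝ) k]
    rw [show α + α = 2 * α by ring, show ((k:ℝ)*α + α) + α = ((k:ℝ)+1) * α + α by ring] at hmono
    have hGk := hGpos k
    have hG2α : 0 < Real.Gamma (2*α) := Real.Gamma_pos_of_pos (by linarith)
    have hzΓ : |z| * Real.Gamma α ≤ Real.Gamma (2*α) := by
      nlinarith [abs_nonneg z]
    have h1 : |z| * Real.Gamma α * Real.Gamma ((k:ℝ)*α + α) ≤
        Real.Gamma (((k:ℝ)+1) * α + α) * Real.Gamma α := by
      nlinarith [hzΓ, hGk]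
    nlinarith [h1, hGα, hGk, abs_nonneg z]
  -- summability
  have hsum : Summable (fun k : ℕ => z ^ k / Real.Gamma ((k:ℝ) * α + α)) := by
    apply summable_of_ratio_norm_eventually_le (by norm_num : (1:ℝ)/2 < 1)
    filter_upwards [Filter.eventually_ge_atTop 8] with k hk
    have hGk := hGpos k
    have hGk1 := hGpos (k+1)
    have hcast : ((k+1 : ℕ) : ℝ) = (k:ℝ) + 1 := by push_cast; ring
    rw [hcast] at hGk1
    have hk9 : (9:ℝ) ≤ (k:ℝ) * α + α := by
      have h8 : (8:ℝ) ≤ (k:ℝ) := by exact_mod_cast hk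
      nlinarith
    have hne : (k:ℝ) * α + α ≠ 0 := by linarith
    have hstep : Real.Gamma ((k:ℝ)*α + α + 1) ≤ Real.Gamma (((k:ℝ)+1)*α + α) := by
      apply (Real.Gamma_strictMonoOn_Ici (by simp only [Set.mem_Ici]; linarith)
        (by simp only [Set.mem_Ici]; nlinarith) (by nlinarith)).le
    rw [Real.Gamma_add_one hne] at hstep
    have hizq : |z| * Real.Gamma ((k:ℝ)*α + α) ≤
        1/2 * Real.Gamma (((k:ℝ)+1)*α + α) := by
      nlinarith [hstep, hGk, abs_nonneg z]
    rw [Real.norm_eq_abs, Real.norm_eq_abs, abs_div, abs_div, abs_pow, abs_pow, hcast,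
      abs_of_pos hGk1, abs_of_pos hGk]
    rw [← mul_div_assoc, div_le_div_iff₀ hGk1 hGk, pow_succ]
    calc |z| ^ k * |z| * Real.Gamma ((k:ℝ)*α + α)
        = |z| ^ k * (|z| * Real.Gamma ((k:ℝ)*α + α)) := by ring
      _ ≤ |z| ^ k * (1/2 * Real.Gamma (((k:ℝ)+1)*α + α)) :=
          mul_le_mul_of_nonneg_left hizq (by positivity)
      _ = 1/2 * |z| ^ k * Real.Gamma (((k:ℝ)+1)*α + α) := by ring
  rcases le_or_gt 0 z with hz0 | hz0
  · -- nonnegative case: all terms nonneg, first term positive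
    have hpos : (0:ℝ) < ∑' k : ℕ, z ^ k / Real.Gamma ((k:ℝ) * α + α) := by
      apply Summable.tsum_pos hsum (fun k => by positivity) 0
      simp only [Nat.cast_zero, pow_zero, zero_mul, zero_add]
      positivity
    exact hpos.ne'
  · -- negative case: alternating series
    set w : ℝ := -z with hw
    have hw0 : 0 < w := by simp only [hw]; linarith
    have hwz : |z| = w := abs_of_neg hz0
    set f : ℕ → ℝ := fun k => z ^ k / Real.Gamma ((k:ℝ) * α + α) with hf
    have he : Summable (fun j : ℕ => f (2 * j)) :=
      hsum.comp_injective (fun a b h => by omega)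
    have ho : Summable (fun j : ℕ => f (2 * j + 1)) :=
      hsum.comp_injective (fun a b h => by omega)
    have heo : (∑' j : ℕ, f (2*j)) + (∑' j : ℕ, f (2*j+1)) = ∑' k : ℕ, f k :=
      tsum_even_add_odd he ho
    have hsplit : (∑' j : ℕ, (f (2*j) + f (2*j+1))) = ∑' k : ℕ, f k := by
      rw [Summable.tsum_add he ho]; exact heo
    -- each pair is f(2j) + f(2j+1) = w^(2j)/Γ - w^(2j+1)/Γ ≥ 0
    have hpair : ∀ j : ℕ, 0 ≤ f (2*j) + f (2*j+1) := by
      intro j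
      have h2j : ((2*j : ℕ) : ℝ) = 2*(j:ℝ) := by push_cast; ring
      have h2j1 : ((2*j+1 : ℕ) : ℝ) = 2*(j:ℝ)+1 := by push_cast; ring
      have hG1 := hGpos (2*j)
      have hG2 := hGpos (2*j+1)
      rw [h2j] at hG1
      rw [h2j1] at hG2
      have hkey := key (2*j)
      rw [h2j, hwz] at hkey
      have hze : z ^ (2*j) = w ^ (2*j) := by
        rw [hw, Even.neg_pow (even_two_mul j)]
      have hzo : z ^ (2*j+1) = -(w ^ (2*j+1)) := by
        rw [hw, Odd.neg_pow ⟨j, by ring⟩, neg_neg]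
      simp only [hf, h2j, h2j1, hze, hzo]
      rw [neg_div, ← sub_eq_add_neg, sub_nonneg, div_le_div_iff₀ hG2 hG1, pow_succ]
      have : w ^ (2*j) * w * Real.Gamma (2*(j:ℝ)*α + α)
          = w ^ (2*j) * (w * Real.Gamma (2*(j:ℝ)*α + α)) := by ring
      rw [this]
      calc w ^ (2*j) * (w * Real.Gamma (2*(j:ℝ)*α + α))
          ≤ w ^ (2*j) * Real.Gamma ((2*(j:ℝ)+1)*α + α) := by
            apply mul_le_mul_of_nonneg_left _ (by positivity)
            exact hkey
        _ = w ^ (2*j) * Real.Gamma ((2*(j:ℝ)+1)*α + α) := rfl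
    -- the pair j = 1 is strictly positive: w·Γ(3α) < Γ(4α)
    have hp1 : 0 < f (2*1) + f (2*1+1) := by
      have hG3 : 0 < Real.Gamma (2*(1:ℝ)*α + α) := Real.Gamma_pos_of_pos (by nlinarith)
      have hG4 : 0 < Real.Gamma ((2*(1:ℝ)+1)*α + α) := Real.Gamma_pos_of_pos (by nlinarith)
      have hmem1 : (2*(1:ℝ)*α + α + 1) ∈ Set.Ici (2:ℝ) := by
        simp only [Set.mem_Ici]; nlinarith
      have hmem2 : ((2*(1:ℝ)+1)*α + α) ∈ Set.Ici (2:ℝ) := by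
        simp only [Set.mem_Ici]; nlinarith
      have hne3 : (2*(1:ℝ)*α + α) ≠ 0 := by nlinarith
      have hmono : Real.Gamma (2*(1:ℝ)*α + α + 1) ≤ Real.Gamma ((2*(1:ℝ)+1)*α + α) := by
        apply (Real.Gamma_strictMonoOn_Ici.monotoneOn) hmem1 hmem2
        nlinarith
      rw [Real.Gamma_add_one hne3] at hmono
      -- w < 3α ≤ (2·1·α + α), so w·Γ(3α) < Γ(4α)
      have hwlt : w < 2*(1:ℝ)*α + α := by
        have : w ≤ Real.Gamma α * (4:ℝ) ^ (α - 1) := hwz ▸ hz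
        nlinarith
      have hstrict : w * Real.Gamma (2*(1:ℝ)*α + α) < Real.Gamma ((2*(1:ℝ)+1)*α + α) := by
        nlinarith
      have h2j : ((2*1 : ℕ) : ℝ) = 2*(1:ℝ) := by norm_num
      have h2j1 : ((2*1+1 : ℕ) : ℝ) = 2*(1:ℝ)+1 := by norm_num
      have hze : z ^ (2*1) = w ^ (2*1) := by
        rw [hw, Even.neg_pow (even_two_mul 1)]
      have hzo : z ^ (2*1+1) = -(w ^ (2*1+1)) := by
        rw [hw, Odd.neg_pow ⟨1, by ring⟩, neg_neg]
      simp only [hf, h2j, h2j1, hze, hzo]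
      rw [neg_div, ← sub_eq_add_neg, sub_pos, div_lt_div_iff₀ hG4 hG3, pow_succ]
      calc w ^ (2*1) * w * Real.Gamma (2*(1:ℝ)*α + α)
          = w ^ (2*1) * (w * Real.Gamma (2*(1:ℝ)*α + α)) := by ring
        _ < w ^ (2*1) * Real.Gamma ((2*(1:ℝ)+1)*α + α) := by
            apply mul_lt_mul_of_pos_left hstrict (by positivity)
        _ = w ^ (2*1) * Real.Gamma ((2*(1:ℝ)+1)*α + α) := rfl
    have hpos : (0:ℝ) < ∑' k : ℕ, f k := by
      rw [← hsplit]
      exact Summable.tsum_pos (he.add ho) hpair 1 hp1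
    exact hpos.ne'
end

section
/- Let a < b be real numbers and 1 < α ≤ 2. Define H : [a,b] × [a,b] → ℝ by H(t,s) = (α−1)(t−a) for a ≤ t ≤ s ≤ b, and H(t,s) = (α−1)(t−a) − (t−s)^{α−1}(b−s)^{2−α} for a ≤ s ≤ t ≤ b. Then |H(t,s)| ≤ max{ (2−α)(b−s), (α−1)(s−a) } for all (t,s) ∈ [a,b] × [a,b]. -/
/-- Bound on the kernel `H` arising from the Green's function of the Caputo
fractional boundary value problem with mixed boundary conditions
`y a = 0 = y' b`: for `1 < α ≤ 2`,
`|H(t,s)| ≤ max{(2-α)(b-s), (α-1)(s-a)}` on `[a,b] × [a,b]`. -/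
theorem kernel_H_bound (a b α : ℝ) (hab : a < b) (hα1 : 1 < α) (hα2 : α ≤ 2)
    (H : ℝ → ℝ → ℝ)
    (hH1 : ∀ t s : ℝ, a ≤ t → t ≤ s → s ≤ b → H t s = (α - 1) * (t - a))
    (hH2 : ∀ t s : ℝ, a ≤ s → s ≤ t → t ≤ b →
      H t s = (α - 1) * (t - a) - (t - s) ^ (α - 1) * (b - s) ^ (2 - α)) :
    ∀ t ∈ Set.Icc a b, ∀ s ∈ Set.Icc a b,
      |H t s| ≤ max ((2 - α) * (b - s)) ((α - 1) * (s - a)) := by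
  intro t ht s hs
  obtain ⟨hat, htb⟩ := ht
  obtain ⟨has, hsb⟩ := hs
  have hα1' : (0:ℝ) ≤ α - 1 := by linarith
  have hα2' : (0:ℝ) ≤ 2 - α := by linarith
  rcases le_total t s with hts | hst
  · rw [hH1 t s hat hts hsb]
    have h1 : (0:ℝ) ≤ (α - 1) * (t - a) := by
      apply mul_nonneg hα1'; linarith
    rw [abs_of_nonneg h1]
    refine le_trans ?_ (le_max_right _ _)
    apply mul_le_mul_of_nonneg_left (by linarith) hα1'
  · rw [hH2 t s has hst htb]
    set x := t - s with hx
    set y := b - s with hy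
    have hx0 : (0:ℝ) ≤ x := by simp [hx]; linarith
    have hy0 : (0:ℝ) ≤ y := by simp [hy]; linarith
    have hxy : x ≤ y := by simp [hx, hy]; linarith
    -- AM-GM : x^(α-1) * y^(2-α) ≤ (α-1)*x + (2-α)*y
    have hamgm : x ^ (α - 1) * y ^ (2 - α) ≤ (α - 1) * x + (2 - α) * y := by
      have := Real.geom_mean_le_arith_mean2_weighted hα1' hα2' hx0 hy0 (by ring)
      linarith
    -- lower bound on the product : (α-1)*x ≤ x^(α-1) * y^(2-α)
    have hlow : (α - 1) * x ≤ x ^ (α - 1) * y ^ (2 - α) := by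
      have h1 : x ^ (α - 1) * x ^ (2 - α) = x := by
        rw [← Real.rpow_add' hx0 (by norm_num)]
        norm_num
      have h2 : x ^ (2 - α) ≤ y ^ (2 - α) := Real.rpow_le_rpow hx0 hxy hα2'
      have h3 : x ^ (α - 1) * x ^ (2 - α) ≤ x ^ (α - 1) * y ^ (2 - α) :=
        mul_le_mul_of_nonneg_left h2 (Real.rpow_nonneg hx0 _)
      have h4 : (α - 1) * x ≤ x := by nlinarith
      linarith
    rw [abs_le]
    constructor
    · refine le_trans (neg_le_neg (le_max_left ((2 - α) * (b - s)) ((α - 1) * (s - a)))) ?_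
      have : (α - 1) * (s - a) ≥ 0 := mul_nonneg hα1' (by linarith)
      have hta : t - a = x + (s - a) := by simp [hx]; 
      nlinarith
    · refine le_trans ?_ (le_max_right _ _)
      have hta : t - a = x + (s - a) := by simp [hx]; 
      nlinarith
end

section
/- Let a < b be real numbers, 1 < α < 2, and let q : [a,b] → ℝ be continuous. Suppose y : [a,b] → ℝ is continuously differentiable, not identically zero, y(a) = y(b) = 0, and for every t ∈ (a,b) the conformable derivative of order α of y at t exists and satisfies (T_α y)(t) + q(t)·y(t) = 0. Then ∫_a^b |q(s)| ds > α^α / ( (b−a)^{α−1} (α−1)^{α−1} ). -/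
open Set Filter intervalIntegral

lemma second_deriv_of_conformable {f : ℝ → ℝ} {t c L : ℝ} (hc : 0 < c)
    (h : Tendsto (fun ε : ℝ => (f (t + ε * c) - f t) / ε) (nhdsWithin 0 {(0:ℝ)}ᶜ) (nhds L)) :
    HasDerivAt f (L / c) t := by
  rw [hasDerivAt_iff_tendsto_slope]
  set e : Homeomorph ℝ ℝ := (Homeomorph.mulRight₀ c hc.ne').trans (Homeomorph.addLeft t) with he
  have he0 : e 0 = t := by simp [he]
  have hmap : Filter.map e (nhdsWithin 0 {(0:ℝ)}ᶜ) = nhdsWithin t {t}ᶜ := by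
    have h2 := e.isEmbedding.map_nhdsWithin_eq ({(0:ℝ)}ᶜ) 0
    rw [h2, he0]
    congr 1
    rw [Set.image_compl_eq e.bijective]
    simp only [Set.image_singleton, he0]
  rw [← hmap, Filter.tendsto_map'_iff]
  have heq : (slope f t) ∘ e = fun ε : ℝ => ((f (t + ε * c) - f t) / ε) / c := by
    funext ε
    have heε : e ε = t + ε * c := by simp [he]
    simp only [Function.comp_apply, slope_def_field, heε]
    rcases eq_or_ne ε 0 with rfl | hε
    · simp
    · rw [div_div]; congr 1; ring
  rw [heq]
  exact h.div_const c

lemma weight_max {L α : ℝ} (hL : 0 < L) (hα1 : 1 < α) (hα2 : α < 2) :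
    (∀ u ∈ Icc (0:ℝ) L, u ^ (α-1) * (L - u) ≤ (α-1)^(α-1) * L^α / α^α) ∧
    (∀ u ∈ Icc (0:ℝ) L, u ≠ (α-1)*L/α →
      u ^ (α-1) * (L - u) < (α-1)^(α-1) * L^α / α^α) := by
  have hα0 : (0:ℝ) < α := by linarith
  have hα1' : (0:ℝ) < α - 1 := by linarith
  set u₀ : ℝ := (α-1)*L/α with hu₀
  have hu₀pos : 0 < u₀ := by positivity
  have hu₀lt : u₀ < L := by
    rw [hu₀, div_lt_iff₀ hα0]
    nlinarith
  set f : ℝ → ℝ := fun u => u ^ (α-1) * (L - u) with hf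
  have hcont : Continuous f := by
    apply Continuous.mul _ (by continuity)
    rw [continuous_iff_continuousAt]
    exact fun x => Real.continuousAt_rpow_const x (α-1) (Or.inr hα1'.le)
  have hderiv : ∀ u : ℝ, 0 < u → HasDerivAt f (u ^ (α-2) * ((α-1)*L - α*u)) u := by
    intro u hu
    have h1 : HasDerivAt (fun u : ℝ => u ^ (α-1)) ((α-1) * u ^ (α-1-1)) u :=
      Real.hasDerivAt_rpow_const (Or.inl hu.ne')
    have h2 : HasDerivAt (fun u : ℝ => L - u) (-1) u := (hasDerivAt_id u).const_sub L
    have h3 := h1.mul h2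
    refine h3.congr_deriv ?_
    have e1 : α - 1 - 1 = α - 2 := by ring
    have e2 : u ^ (α-1) = u ^ (α-2) * u := by
      rw [show α - 1 = (α-2)+1 by ring, Real.rpow_add hu, Real.rpow_one]
    rw [e1, e2]; ring
  have hmono : StrictMonoOn f (Icc 0 u₀) := by
    apply strictMonoOn_of_deriv_pos (convex_Icc 0 u₀) (hcont.continuousOn)
    intro u hu
    rw [interior_Icc] at hu
    rw [(hderiv u hu.1).deriv]
    have : 0 < (α-1)*L - α*u := by
      have := hu.2
      rw [hu₀, lt_div_iff₀ hα0] at this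
      nlinarith
    exact mul_pos (Real.rpow_pos_of_pos hu.1 _) this
  have hanti : StrictAntiOn f (Icc u₀ L) := by
    apply strictAntiOn_of_deriv_neg (convex_Icc u₀ L) (hcont.continuousOn)
    intro u hu
    rw [interior_Icc] at hu
    have hupos : 0 < u := lt_trans hu₀pos hu.1
    rw [(hderiv u hupos).deriv]
    have h4 : (α-1)*L - α*u < 0 := by
      have := hu.1
      rw [hu₀, div_lt_iff₀ hα0] at this
      nlinarith
    have h5 : 0 < u ^ (α-2) := Real.rpow_pos_of_pos hupos _
    nlinarith
  have hval : f u₀ = (α-1)^(α-1) * L^α / α^α := by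
    have e1 : L - u₀ = L / α := by
      rw [hu₀]; field_simp; ring
    have e2 : u₀ ^ (α-1) = (α-1)^(α-1) * L^(α-1) / α^(α-1) := by
      rw [hu₀, Real.div_rpow (by positivity) hα0.le, Real.mul_rpow hα1'.le hL.le]
    have e3 : L ^ α = L^(α-1) * L := by
      rw [← Real.rpow_add_one hL.ne' (α-1)]; ring_nf
    have e4 : α ^ α = α^(α-1) * α := by
      rw [← Real.rpow_add_one hα0.ne' (α-1)]; ring_nf
    rw [hf]; simp only [e2, e3, e4, e1]
    field_simp
  have hstrict : ∀ u ∈ Icc (0:ℝ) L, u ≠ u₀ → f u < f u₀ := by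
    intro u hu hne
    rcases lt_or_gt_of_ne hne with h | h
    · exact hmono ⟨hu.1, h.le⟩ ⟨hu₀pos.le, le_refl _⟩ h
    · exact hanti ⟨le_refl _, hu₀lt.le⟩ ⟨h.le, hu.2⟩ h
  constructor
  · intro u hu
    rcases eq_or_ne u u₀ with rfl | hne
    · rw [← hval]
    · exact (hval ▸ hstrict u hu hne).le
  · intro u hu hne
    exact hval ▸ hstrict u hu hne

set_option maxHeartbeats 2000000 in
/-- **Abdeljawad–Alzabut–Jarad Lyapunov inequality** for the conformable
Dirichlet problem `T_α y + q y = 0`, `y a = y b = 0`, `1 < α < 2`. The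
conformable derivative of order `α ∈ (1,2)` of `y` at `t` is
`(T_α y)(t) = lim_{ε→0} (y'(t + ε (t-a)^{2-α}) - y'(t))/ε`; we express its
existence together with the equation `(T_α y)(t) = -(q t · y t)` via a filter
limit. -/
theorem lyapunov_conformable (a b α : ℝ) (hab : a < b) (hα1 : 1 < α) (hα2 : α < 2)
    (q y : ℝ → ℝ)
    (hq : ContinuousOn q (Set.Icc a b))
    (hy1 : ∀ t ∈ Set.Icc a b, DifferentiableAt ℝ y t)
    (hy1' : ContinuousOn (deriv y) (Set.Icc a b))
    (hyne : ∃ t ∈ Set.Icc a b, y t ≠ 0)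
    (hya : y a = 0) (hyb : y b = 0)
    (hode : ∀ t ∈ Set.Ioo a b,
      Filter.Tendsto
        (fun ε : ℝ => (deriv y (t + ε * (t - a) ^ (2 - α)) - deriv y t) / ε)
        (nhdsWithin 0 {(0:ℝ)}ᶜ) (nhds (-(q t * y t)))) :
    α ^ α / ((b - a) ^ (α - 1) * (α - 1) ^ (α - 1)) < ∫ s in a..b, |q s| := by
  have hL : (0:ℝ) < b - a := sub_pos.2 hab
  have hα0 : (0:ℝ) < α := by linarith
  have hα1' : (0:ℝ) < α - 1 := by linarith
  have hyc : ContinuousOn y (Set.Icc a b) := fun t ht =>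
    (hy1 t ht).continuousAt.continuousWithinAt
  -- maximum point
  obtain ⟨c, hcmem, hcmax⟩ := isCompact_Icc.exists_isMaxOn (Set.nonempty_Icc.2 hab.le)
    (continuous_abs.comp_continuousOn hyc)
  set M : ℝ := |y c| with hM
  have hmax : ∀ s ∈ Set.Icc a b, |y s| ≤ M := fun s hs => hcmax hs
  have hMpos : 0 < M := by
    obtain ⟨t₀, ht₀, hyt₀⟩ := hyne
    exact lt_of_lt_of_le (abs_pos.2 hyt₀) (hmax t₀ ht₀)
  have hac : a < c := by
    rcases lt_or_eq_of_le hcmem.1 with h | h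
    · exact h
    · exfalso; rw [hM, ← h, hya] at hMpos; simp at hMpos
  have hcb : c < b := by
    rcases lt_or_eq_of_le hcmem.2 with h | h
    · exact h
    · exfalso; rw [hM, h, hyb] at hMpos; simp at hMpos
  -- second derivative
  set g : ℝ → ℝ := fun s => -(q s * y s) * (s - a) ^ (α - 2) with hgdef
  have hg : ∀ t ∈ Set.Ioo a b, HasDerivAt (deriv y) (g t) t := by
    intro t ht
    have hta : 0 < t - a := sub_pos.2 ht.1
    have hcpos : 0 < (t - a) ^ (2 - α) := Real.rpow_pos_of_pos hta _
    have h5 := second_deriv_of_conformable hcpos (hode t ht)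
    convert h5 using 1
    rw [hgdef]
    simp only
    rw [show α - 2 = -(2 - α) by ring, Real.rpow_neg hta.le, div_eq_mul_inv]
  -- auxiliary functions
  set G₁ : ℝ → ℝ := fun s => -(q s * y s) * (s - a) ^ (α - 1) with hG₁def
  set G₂ : ℝ → ℝ := fun s => -(q s * y s) * ((s - a) ^ (α - 2) * (b - s)) with hG₂def
  set F₁ : ℝ → ℝ := fun s => (s - a) * deriv y s - y s with hF₁def
  set F₂ : ℝ → ℝ := fun s => (b - s) * deriv y s + y s with hF₂def
  set Ψ : ℝ → ℝ := fun s => (s - a) ^ (α-1) * (b - s) * (|q s| * |y s|) with hΨdef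
  have hrpow1 : Continuous fun s : ℝ => (s - a) ^ (α - 1) := by
    have h1 : Continuous fun u : ℝ => u ^ (α-1) :=
      continuous_iff_continuousAt.2 fun x => Real.continuousAt_rpow_const x _ (Or.inr hα1'.le)
    exact h1.comp (continuous_sub_right a)
  have hIccsub : Icc a c ⊆ Icc a b := Icc_subset_Icc le_rfl hcb.le
  have hIccsub2 : Icc c b ⊆ Icc a b := Icc_subset_Icc hac.le le_rfl
  have hcontG₁ : ContinuousOn G₁ (Icc a b) := ((hq.mul hyc).neg).mul hrpow1.continuousOn
  have hcontpow2 : ContinuousOn (fun s : ℝ => (s - a) ^ (α - 2)) (Icc c b) := by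
    intro s hs
    have h1 : ContinuousAt (fun u : ℝ => u ^ (α-2)) (s - a) :=
      Real.continuousAt_rpow_const _ _ (Or.inl (sub_pos.2 (lt_of_lt_of_le hac hs.1)).ne')
    have h2 : ContinuousAt (fun s : ℝ => (s - a) ^ (α - 2)) s :=
      ContinuousAt.comp (g := fun u : ℝ => u ^ (α-2)) (f := fun x : ℝ => x - a) h1
        ((continuous_sub_right a).continuousAt)
    exact h2.continuousWithinAt
  have hcontG₂ : ContinuousOn G₂ (Icc c b) :=
    (((hq.mono hIccsub2).mul (hyc.mono hIccsub2)).neg).mul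
      (hcontpow2.mul ((continuous_const.sub continuous_id).continuousOn))
  have hcontΨ : ContinuousOn Ψ (Icc a b) :=
    ((hrpow1.mul (continuous_const.sub continuous_id)).continuousOn).mul (hq.abs.mul hyc.abs)
  -- FTC on [a,c]
  have FTC₁ : ∫ s in a..c, G₁ s = F₁ c - F₁ a := by
    apply intervalIntegral.integral_eq_sub_of_hasDeriv_right_of_le hac.le
    · exact ((continuous_sub_right a).continuousOn.mul (hy1'.mono hIccsub)).sub
        (hyc.mono hIccsub)
    · intro s hs
      have hs' : s ∈ Ioo a b := ⟨hs.1, hs.2.trans hcb⟩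
      have hd1 : HasDerivAt (fun s => (s - a) * deriv y s) (1 * deriv y s + (s-a) * g s) s :=
        ((hasDerivAt_id s).sub_const a).mul (hg s hs')
      have hd2 := hd1.sub ((hy1 s (hIccsub (Ioo_subset_Icc_self hs))).hasDerivAt)
      have he : 1 * deriv y s + (s-a) * g s - deriv y s = G₁ s := by
        have hsa : 0 < s - a := sub_pos.2 hs.1
        rw [hgdef, hG₁def]
        simp only
        rw [show α - 1 = (α-2) + 1 by ring, Real.rpow_add hsa, Real.rpow_one]
        ring
      exact (he ▸ hd2).hasDerivWithinAt
    · exact (hcontG₁.mono hIccsub).intervalIntegrable_of_Icc hac.le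
  -- FTC on [c,b]
  have FTC₂ : ∫ s in c..b, G₂ s = F₂ b - F₂ c := by
    apply intervalIntegral.integral_eq_sub_of_hasDeriv_right_of_le hcb.le
    · exact (((continuous_const.sub continuous_id).continuousOn).mul (hy1'.mono hIccsub2)).add
        (hyc.mono hIccsub2)
    · intro s hs
      have hs' : s ∈ Ioo a b := ⟨hac.trans hs.1, hs.2⟩
      have hd1 : HasDerivAt (fun s => (b - s) * deriv y s) ((-1) * deriv y s + (b-s) * g s) s :=
        ((hasDerivAt_id s).const_sub b).mul (hg s hs')
      have hd2 := hd1.add ((hy1 s (hIccsub2 (Ioo_subset_Icc_self hs))).hasDerivAt)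
      have he : (-1) * deriv y s + (b-s) * g s + deriv y s = G₂ s := by
        rw [hgdef, hG₂def]; simp only; ring
      exact (he ▸ hd2).hasDerivWithinAt
    · exact hcontG₂.intervalIntegrable_of_Icc hcb.le
  have hI₁ : ∫ s in a..c, G₁ s = (c-a) * deriv y c - y c := by
    rw [FTC₁, hF₁def]; simp [hya]
  have hI₂ : ∫ s in c..b, G₂ s = -((b-c) * deriv y c) - y c := by
    rw [FTC₂, hF₂def]; simp [hyb]; ring
  have hrep : (b-a) * y c = -((b-c) * ∫ s in a..c, G₁ s) - (c-a) * ∫ s in c..b, G₂ s := by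
    rw [hI₁, hI₂]; ring
  -- integrability
  have hintΨac : IntervalIntegrable Ψ MeasureTheory.volume a c :=
    (hcontΨ.mono hIccsub).intervalIntegrable_of_Icc hac.le
  have hintΨcb : IntervalIntegrable Ψ MeasureTheory.volume c b :=
    (hcontΨ.mono hIccsub2).intervalIntegrable_of_Icc hcb.le
  -- bound first piece
  have hstep1 : (b-c) * |∫ s in a..c, G₁ s| ≤ ∫ s in a..c, Ψ s := by
    have hpt : ∀ s ∈ Icc a c, (b-c) * |G₁ s| ≤ Ψ s := by
      intro s hs
      have hsa : (0:ℝ) ≤ s - a := sub_nonneg.2 hs.1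
      have h1 : |G₁ s| = (s-a)^(α-1) * (|q s| * |y s|) := by
        rw [hG₁def]
        simp only
        rw [abs_mul, abs_neg, abs_mul, abs_of_nonneg (Real.rpow_nonneg hsa _)]
        ring
      rw [h1, hΨdef]
      simp only
      have h2 : b - c ≤ b - s := by linarith [hs.2]
      nlinarith [mul_nonneg (sub_nonneg.2 h2) (mul_nonneg (Real.rpow_nonneg hsa (α-1))
        (mul_nonneg (abs_nonneg (q s)) (abs_nonneg (y s))))]
    calc (b-c) * |∫ s in a..c, G₁ s|
        ≤ (b-c) * ∫ s in a..c, |G₁ s| := by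
          apply mul_le_mul_of_nonneg_left
            (intervalIntegral.abs_integral_le_integral_abs hac.le) (by linarith)
      _ = ∫ s in a..c, (b-c) * |G₁ s| := (intervalIntegral.integral_const_mul _ _).symm
      _ ≤ ∫ s in a..c, Ψ s := by
          apply intervalIntegral.integral_mono_on hac.le _ hintΨac hpt
          exact (continuous_const.continuousOn.mul
            (hcontG₁.mono hIccsub).abs).intervalIntegrable_of_Icc hac.le
  -- bound second piece
  have hstep2 : (c-a) * |∫ s in c..b, G₂ s| ≤ ∫ s in c..b, Ψ s := by
    have hpt : ∀ s ∈ Icc c b, (c-a) * |G₂ s| ≤ Ψ s := by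
      intro s hs
      have hsa : (0:ℝ) < s - a := sub_pos.2 (lt_of_lt_of_le hac hs.1)
      have hbs : (0:ℝ) ≤ b - s := sub_nonneg.2 hs.2
      have h1 : |G₂ s| = (|q s| * |y s|) * ((s-a)^(α-2) * (b-s)) := by
        rw [hG₂def]
        simp only
        rw [abs_mul, abs_neg, abs_mul, abs_mul,
          abs_of_nonneg (Real.rpow_nonneg hsa.le _), abs_of_nonneg hbs]
      rw [h1, hΨdef]
      simp only
      have h3 : (s-a)^(α-1) = (s-a)^(α-2) * (s-a) := by
        rw [show α - 1 = (α-2) + 1 by ring, Real.rpow_add hsa, Real.rpow_one]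
      rw [h3]
      have h4 : c - a ≤ s - a := by linarith [hs.1]
      nlinarith [Real.rpow_nonneg hsa.le (α-2), mul_nonneg (abs_nonneg (q s)) (abs_nonneg (y s)),
        mul_nonneg (mul_nonneg (abs_nonneg (q s)) (abs_nonneg (y s)))
          (mul_nonneg (Real.rpow_nonneg hsa.le (α-2)) hbs)]
    calc (c-a) * |∫ s in c..b, G₂ s|
        ≤ (c-a) * ∫ s in c..b, |G₂ s| := by
          apply mul_le_mul_of_nonneg_left
            (intervalIntegral.abs_integral_le_integral_abs hcb.le) (by linarith)
      _ = ∫ s in c..b, (c-a) * |G₂ s| := (intervalIntegral.integral_const_mul _ _).symm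
      _ ≤ ∫ s in c..b, Ψ s := by
          apply intervalIntegral.integral_mono_on hcb.le _ hintΨcb hpt
          exact (continuous_const.continuousOn.mul
            hcontG₂.abs).intervalIntegrable_of_Icc hcb.le
  -- combination
  have hkey : (b-a) * M ≤ ∫ s in a..b, Ψ s := by
    have h6 : (b-a) * M = |(b-a) * y c| := by
      rw [abs_mul, abs_of_pos hL, hM]
    rw [h6, hrep]
    calc |(-((b-c) * ∫ s in a..c, G₁ s)) - (c-a) * ∫ s in c..b, G₂ s|
        ≤ |(-((b-c) * ∫ s in a..c, G₁ s))| + |(c-a) * ∫ s in c..b, G₂ s| := by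
          exact abs_sub _ _
      _ = (b-c) * |∫ s in a..c, G₁ s| + (c-a) * |∫ s in c..b, G₂ s| := by
          rw [abs_neg, abs_mul, abs_mul, abs_of_pos (sub_pos.2 hcb), abs_of_pos (sub_pos.2 hac)]
      _ ≤ (∫ s in a..c, Ψ s) + ∫ s in c..b, Ψ s := add_le_add hstep1 hstep2
      _ = ∫ s in a..b, Ψ s := intervalIntegral.integral_add_adjacent_intervals hintΨac hintΨcb
  -- weight bound
  obtain ⟨hwle, hwlt⟩ := weight_max hL hα1 hα2
  set K' : ℝ := (α-1)^(α-1) * (b-a)^α / α^α with hK'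
  have hA : (0:ℝ) < α^α := Real.rpow_pos_of_pos hα0 α
  have hB : (0:ℝ) < (α-1)^(α-1) := Real.rpow_pos_of_pos hα1' _
  have hP : (0:ℝ) < (b-a)^(α-1) := Real.rpow_pos_of_pos hL _
  have hK'pos : 0 < K' := by
    rw [hK']
    have h1 : (0:ℝ) < (b-a)^α := Real.rpow_pos_of_pos hL α
    positivity
  have hwb : ∀ s ∈ Icc a b, (s-a)^(α-1)*(b-s) ≤ K' := by
    intro s hs
    have h1 := hwle (s-a) ⟨sub_nonneg.2 hs.1, by linarith [hs.2]⟩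
    rw [show (b-a) - (s-a) = b - s by ring] at h1
    exact h1
  have hptle : ∀ s ∈ Icc a b, Ψ s ≤ K' * (M * |q s|) := by
    intro s hs
    calc Ψ s = ((s-a)^(α-1)*(b-s)) * (|q s| * |y s|) := rfl
      _ ≤ K' * (|q s| * |y s|) := mul_le_mul_of_nonneg_right (hwb s hs) (by positivity)
      _ ≤ K' * (M * |q s|) := by
          apply mul_le_mul_of_nonneg_left _ hK'pos.le
          have h2 := hmax s hs
          nlinarith [abs_nonneg (q s)]
  have hcontrhs : ContinuousOn (fun s => K' * (M * |q s|)) (Icc a b) :=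
    continuous_const.continuousOn.mul (continuous_const.continuousOn.mul hq.abs)
  have hintle : ∫ s in a..b, Ψ s ≤ K' * M * ∫ s in a..b, |q s| := by
    calc ∫ s in a..b, Ψ s ≤ ∫ s in a..b, K' * (M * |q s|) :=
          intervalIntegral.integral_mono_on hab.le
            (hcontΨ.intervalIntegrable_of_Icc hab.le)
            (hcontrhs.intervalIntegrable_of_Icc hab.le) hptle
      _ = K' * M * ∫ s in a..b, |q s| := by
          rw [intervalIntegral.integral_const_mul, intervalIntegral.integral_const_mul, mul_assoc]
  have hJpos : 0 < ∫ s in a..b, |q s| := by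
    by_contra hcon
    push_neg at hcon
    have h1 : K' * M * ∫ s in a..b, |q s| ≤ 0 :=
      mul_nonpos_of_nonneg_of_nonpos (mul_pos hK'pos hMpos).le hcon
    linarith [hkey, hintle, mul_pos hL hMpos]
  have hqex : ∃ s₀ ∈ Icc a b, q s₀ ≠ 0 := by
    by_contra hcon
    push_neg at hcon
    have hz : ∫ s in a..b, |q s| = 0 := by
      have he : Set.EqOn (fun s => |q s|) (fun _ => (0:ℝ)) (Set.uIcc a b) := by
        intro s hs
        rw [Set.uIcc_of_le hab.le] at hs
        simp [hcon s hs]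
      rw [intervalIntegral.integral_congr he]
      simp
    linarith
  set sstar : ℝ := a + (α-1)*(b-a)/α with hsstar
  have hstar1 : a < sstar := by
    have h1 : 0 < (α-1)*(b-a)/α := by positivity
    rw [hsstar]; linarith
  have hstar2 : sstar < b := by
    have h1 : (α-1)*(b-a)/α < b - a := by
      rw [div_lt_iff₀ hα0]; nlinarith
    rw [hsstar]; linarith
  obtain ⟨s₁, hs₁mem, hs₁q, hs₁ne⟩ : ∃ s₁ ∈ Icc a b, q s₁ ≠ 0 ∧ s₁ ≠ sstar := by
    obtain ⟨s₀, hs₀, hq₀⟩ := hqex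
    by_cases hcase : s₀ = sstar
    · have hqstar : q sstar ≠ 0 := hcase ▸ hq₀
      have hca : ContinuousAt q sstar :=
        (hq sstar ⟨hstar1.le, hstar2.le⟩).continuousAt (Icc_mem_nhds hstar1 hstar2)
      have h1 : ∀ᶠ x in nhds sstar, q x ≠ 0 := hca.eventually_ne hqstar
      have h2 : ∀ᶠ x in nhds sstar, x ∈ Icc a b :=
        eventually_of_mem (Icc_mem_nhds hstar1 hstar2) (fun x hx => hx)
      have h3 : ∀ᶠ x in nhdsWithin sstar {sstar}ᶜ, q x ≠ 0 ∧ x ∈ Icc a b :=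
        nhdsWithin_le_nhds (h1.and h2)
      have h4 : ∀ᶠ x in nhdsWithin sstar {sstar}ᶜ, x ∈ ({sstar}ᶜ : Set ℝ) :=
        eventually_mem_nhdsWithin
      obtain ⟨x, hx1, hx2⟩ := (h3.and h4).exists
      exact ⟨x, hx1.2, hx1.1, by simpa using hx2⟩
    · exact ⟨s₀, hs₀, hq₀, hcase⟩
  have hs₁strict : Ψ s₁ < K' * (M * |q s₁|) := by
    have hwlt1 : (s₁-a)^(α-1)*(b-s₁) < K' := by
      have hne : s₁ - a ≠ (α-1)*(b-a)/α := by
        intro hcon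
        apply hs₁ne
        rw [hsstar]; linarith [hcon]
      have h1 := hwlt (s₁-a) ⟨sub_nonneg.2 hs₁mem.1, by linarith [hs₁mem.2]⟩ hne
      rw [show (b-a) - (s₁-a) = b - s₁ by ring] at h1
      exact h1
    have hq1 : 0 < |q s₁| := abs_pos.2 hs₁q
    have h0' : (0:ℝ) ≤ (s₁-a)^(α-1)*(b-s₁) :=
      mul_nonneg (Real.rpow_nonneg (sub_nonneg.2 hs₁mem.1) _) (sub_nonneg.2 hs₁mem.2)
    calc Ψ s₁ = ((s₁-a)^(α-1)*(b-s₁)) * (|q s₁| * |y s₁|) := rfl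
      _ ≤ ((s₁-a)^(α-1)*(b-s₁)) * (|q s₁| * M) := by
          apply mul_le_mul_of_nonneg_left _ h0'
          exact mul_le_mul_of_nonneg_left (hmax s₁ hs₁mem) (abs_nonneg _)
      _ < K' * (|q s₁| * M) := mul_lt_mul_of_pos_right hwlt1 (by positivity)
      _ = K' * (M * |q s₁|) := by ring
  have hstrictint : ∫ s in a..b, Ψ s < ∫ s in a..b, K' * (M * |q s|) :=
    intervalIntegral.integral_lt_integral_of_continuousOn_of_le_of_exists_lt hab hcontΨ
      hcontrhs (fun x hx => hptle x ⟨hx.1.le, hx.2⟩) ⟨s₁, hs₁mem, hs₁strict⟩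
  have hfin : (b-a) * M < K' * M * ∫ s in a..b, |q s| := by
    calc (b-a)*M ≤ ∫ s in a..b, Ψ s := hkey
      _ < ∫ s in a..b, K' * (M * |q s|) := hstrictint
      _ = K' * M * ∫ s in a..b, |q s| := by
          rw [intervalIntegral.integral_const_mul, intervalIntegral.integral_const_mul, mul_assoc]
  have hba : b - a < K' * ∫ s in a..b, |q s| := by
    nlinarith [hfin, hMpos]
  have hpow : (b-a)^α = (b-a)^(α-1) * (b-a) := by
    rw [← Real.rpow_add_one hL.ne' (α-1)]; ring_nf
  rw [hK', hpow] at hba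
  rw [div_lt_iff₀ (by positivity)]
  have h10 : (b-a) * α^α < (α-1)^(α-1) * ((b-a)^(α-1)*(b-a)) * ∫ s in a..b, |q s| := by
    rw [div_mul_eq_mul_div, lt_div_iff₀ hA] at hba
    linarith
  nlinarith [h10, hL, hA, hJpos, hP, hB]
end
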